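/- arXiv:2401.04129 — 10 statements merged into one kernel-verified Lean document; each statement's English description precedes it below -/
import Mathlib

section
/- Under the assumptions $1<p<N$, $0<\mu<N-p$, $\frac{\mu}{p}\le\frac{s}{r}<\frac{\mu}{p}+1$ with $r=\frac{p(N-s)}{N-p-\mu}$, one has $0<\left(\frac{p-s+\mu}{p}\right)^2\left[\frac{p(N-s)}{p-s+\mu}-1\right]<N-1$. In particular, setting $\varsigma=p/(p-s+\mu)$ and $K=\frac{p(N-s)}{p-s+\mu}$, for every integer $k\ge 1$ the eigenvalue $\lambda_k=k(N-2+k)$ of $-\Delta_{\mathbb{S}^{N-1}}$ satisfies $\varsigma^2\lambda_k>K-1$. -/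
set_option maxHeartbeats 1600000 in
theorem ckn_spherical_eigenvalue_bound (N : ℕ) (p μ s : ℝ)
    (hN : 2 ≤ N) (hp1 : 1 < p) (hpN : p < (N : ℝ))
    (hμ0 : 0 < μ) (hμ : μ < (N : ℝ) - p)
    (hs1 : μ / p ≤ s / (p * ((N : ℝ) - s) / ((N : ℝ) - p - μ)))
    (hs2 : s / (p * ((N : ℝ) - s) / ((N : ℝ) - p - μ)) < μ / p + 1) :
    (0 < ((p - s + μ) / p) ^ 2 * (p * ((N : ℝ) - s) / (p - s + μ) - 1) ∧
      ((p - s + μ) / p) ^ 2 * (p * ((N : ℝ) - s) / (p - s + μ) - 1) < (N : ℝ) - 1) ∧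
    ∀ k : ℕ, 1 ≤ k →
      (p / (p - s + μ)) ^ 2 * ((k : ℝ) * ((N : ℝ) - 2 + (k : ℝ)))
        > p * ((N : ℝ) - s) / (p - s + μ) - 1 := by
  have hp0 : (0:ℝ) < p := lt_trans one_pos hp1
  have hN2 : (2:ℝ) ≤ (N:ℝ) := by exact_mod_cast hN
  have hA : (0:ℝ) < (N:ℝ) - p - μ := by linarith
  -- s < N
  have hsN : s < (N:ℝ) := by
    by_contra h
    push_neg at h
    have hs0 : (0:ℝ) < s := by linarith
    have hrle : p * ((N : ℝ) - s) / ((N : ℝ) - p - μ) ≤ 0 := by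
      apply div_nonpos_of_nonpos_of_nonneg
      · nlinarith
      · linarith
    have h2 : s / (p * ((N : ℝ) - s) / ((N : ℝ) - p - μ)) ≤ 0 :=
      div_nonpos_of_nonneg_of_nonpos (le_of_lt hs0) hrle
    have h3 : (0:ℝ) < μ / p := div_pos hμ0 hp0
    linarith
  have hr : 0 < p * ((N : ℝ) - s) / ((N : ℝ) - p - μ) :=
    div_pos (mul_pos hp0 (by linarith)) hA
  -- from hs1 : μ N ≤ s (N - p)
  have h1 : μ * (p * ((N : ℝ) - s) / ((N : ℝ) - p - μ)) ≤ s * p :=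
    (div_le_div_iff₀ hp0 hr).mp hs1
  have h1' : μ * (p * ((N : ℝ) - s)) ≤ s * p * ((N:ℝ) - p - μ) := by
    rw [← mul_div_assoc] at h1
    exact (div_le_iff₀ hA).mp h1
  have hsNp : μ * (N:ℝ) ≤ s * ((N:ℝ) - p) := by nlinarith [h1', hp0]
  -- from hs2 : s < μ + p
  have h2' : s * p * ((N:ℝ) - p - μ) < (μ + p) * (p * ((N : ℝ) - s)) := by
    have he : μ / p + 1 = (μ + p) / p := by field_simp
    have hs2' := hs2
    rw [he] at hs2'
    have h2 := (div_lt_div_iff₀ hr hp0).mp hs2'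
    rw [← mul_div_assoc] at h2
    exact (lt_div_iff₀ hA).mp h2
  have hsμp : s < μ + p := by
    have hN0 : (0:ℝ) < (N:ℝ) := by linarith
    nlinarith [h2', mul_pos hp0 hN0]
  have ht : (0:ℝ) < p - s + μ := by linarith
  -- K > 1
  have hK1 : p - s + μ < p * ((N:ℝ) - s) := by
    nlinarith [mul_pos (sub_pos.mpr hp1) (show (0:ℝ) < μ + p - s by linarith),
      mul_pos hp0 hA]
  -- main inequality  t (p(N-s) - t) < p² (N-1)
  have hT : (p - s + μ) * ((N:ℝ) - p) ≤ p * ((N:ℝ) - p - μ) := by nlinarith [hsNp]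
  have hTnn : (0:ℝ) ≤ (p - s + μ) * ((N:ℝ) - p) := mul_nonneg ht.le (by linarith)
  have hpAnn : (0:ℝ) ≤ p * ((N:ℝ) - p - μ) := mul_nonneg hp0.le hA.le
  have E1 : (p * ((N:ℝ) - p - μ) * ((N:ℝ) - p)) * ((p - s + μ) * ((N:ℝ) - p)) ≤
      (p * ((N:ℝ) - p - μ) * ((N:ℝ) - p)) * (p * ((N:ℝ) - p - μ)) :=
    mul_le_mul_of_nonneg_left hT (mul_nonneg hpAnn (by linarith))
  have E2 : ((p - s + μ) * ((N:ℝ) - p)) * ((p - s + μ) * ((N:ℝ) - p)) ≤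
      (p * ((N:ℝ) - p - μ)) * (p * ((N:ℝ) - p - μ)) :=
    mul_le_mul hT hT hTnn hpAnn
  have E2' : (p - 1) * (((p - s + μ) * ((N:ℝ) - p)) * ((p - s + μ) * ((N:ℝ) - p))) ≤
      (p - 1) * ((p * ((N:ℝ) - p - μ)) * (p * ((N:ℝ) - p - μ))) :=
    mul_le_mul_of_nonneg_left E2 (by linarith)
  have E3 : p^2 * ((N:ℝ) - 1) * (((N:ℝ) - p - μ)^2) < p^2 * ((N:ℝ) - 1) * (((N:ℝ) - p)^2) := by
    have : ((N:ℝ) - p - μ)^2 < ((N:ℝ) - p)^2 := by nlinarith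
    have hpos : (0:ℝ) < p^2 * ((N:ℝ) - 1) := mul_pos (pow_pos hp0 2) (by linarith)
    exact (mul_lt_mul_iff_right₀ hpos).mpr this
  have ineq2 : ((p - s + μ) * (p * ((N:ℝ) - s) - (p - s + μ))) * (((N:ℝ) - p)^2) <
      (p^2 * ((N:ℝ) - 1)) * (((N:ℝ) - p)^2) := by linarith [E1, E2', E3]
  have hIneq : (p - s + μ) * (p * ((N:ℝ) - s) - (p - s + μ)) < p^2 * ((N:ℝ) - 1) := by
    have hsq : (0:ℝ) < ((N:ℝ) - p)^2 := pow_pos (by linarith) 2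
    exact (mul_lt_mul_iff_left₀ hsq).mp ineq2
  refine ⟨⟨?_, ?_⟩, ?_⟩
  · apply mul_pos (pow_pos (div_pos ht hp0) 2)
    have : 1 < p * ((N:ℝ) - s) / (p - s + μ) := (one_lt_div ht).mpr hK1
    linarith
  · rw [show p * ((N : ℝ) - s) / (p - s + μ) - 1 =
        (p * ((N : ℝ) - s) - (p - s + μ)) / (p - s + μ) from div_sub_one ht.ne',
      div_pow, div_mul_div_comm,
      div_lt_iff₀ (mul_pos (pow_pos hp0 2) ht)]
    nlinarith [mul_lt_mul_of_pos_left hIneq ht]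
  · intro k hk
    have hk1 : (1:ℝ) ≤ (k:ℝ) := by exact_mod_cast hk
    have hlam : (N:ℝ) - 1 ≤ (k:ℝ) * ((N:ℝ) - 2 + (k:ℝ)) := by nlinarith
    have hbase : p * ((N:ℝ) - s) / (p - s + μ) - 1 <
        (p / (p - s + μ)) ^ 2 * ((N:ℝ) - 1) := by
      rw [show p * ((N : ℝ) - s) / (p - s + μ) - 1 =
          (p * ((N : ℝ) - s) - (p - s + μ)) / (p - s + μ) from div_sub_one ht.ne',
        div_pow, div_mul_eq_mul_div,
        div_lt_div_iff₀ ht (pow_pos ht 2)]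
      nlinarith [mul_lt_mul_of_pos_left hIneq ht]
    have hmono : (p / (p - s + μ)) ^ 2 * ((N:ℝ) - 1) ≤
        (p / (p - s + μ)) ^ 2 * ((k:ℝ) * ((N:ℝ) - 2 + (k:ℝ))) :=
      mul_le_mul_of_nonneg_left hlam (by positivity)
    linarith
end

section
/- Let $1<p<2$ and $\tilde\omega:\mathbb{R}^N\times\mathbb{R}^N\to\mathbb{R}^N$ be defined by $\tilde\omega(x,x+y)=\big(\frac{|x+y|}{(2-p)|x+y|+(p-1)|x|}\big)^{1/(p-2)}x$ if $|x|<|x+y|$ and $\tilde\omega(x,x+y)=x$ if $|x+y|\le|x|$. Then for all $x\ne 0$ and all $y\in\mathbb{R}^N$, $|x|^{p-2}|y|^2+(p-2)|\tilde\omega(x,x+y)|^{p-2}(|x|-|x+y|)^2\ge 0$. -/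
open Real

theorem tilde_omega_nonneg (N : ℕ) (hN : 1 ≤ N) (p : ℝ) (hp1 : 1 < p) (hp2 : p < 2)
    (x y : EuclideanSpace ℝ (Fin N)) (hx : x ≠ 0) :
    let w : EuclideanSpace ℝ (Fin N) :=
      if ‖x‖ < ‖x + y‖ then
        ((‖x + y‖ / ((2 - p) * ‖x + y‖ + (p - 1) * ‖x‖)) ^ ((1 : ℝ) / (p - 2))) • x
      else x
    ‖x‖ ^ (p - 2) * ‖y‖ ^ 2 + (p - 2) * ‖w‖ ^ (p - 2) * (‖x‖ - ‖x + y‖) ^ 2 ≥ 0 := by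
  intro w
  have ha : 0 < ‖x‖ := norm_pos_iff.mpr hx
  set a := ‖x‖ with ha_def
  set b := ‖x + y‖ with hb_def
  have hb : 0 ≤ b := norm_nonneg _
  have habs : |a - b| ≤ ‖y‖ := by
    have := abs_norm_sub_norm_le x (x + y)
    simpa [← ha_def, ← hb_def, neg_sub] using this
  have hsq : (a - b) ^ 2 ≤ ‖y‖ ^ 2 := by
    have := sq_abs (a - b)
    nlinarith [abs_nonneg (a - b), norm_nonneg y]
  have hA : (0 : ℝ) < a ^ (p - 2) := Real.rpow_pos_of_pos ha _
  have hs : (0 : ℝ) ≤ (a - b) ^ 2 := sq_nonneg _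
  by_cases h : a < b
  · have hd : 0 < (2 - p) * b + (p - 1) * a := by nlinarith
    set d := (2 - p) * b + (p - 1) * a with hd_def
    have hbase : 0 < b / d := div_pos (by linarith) hd
    have hw : w = ((b / d) ^ ((1 : ℝ) / (p - 2))) • x := by
      simp only [w, ← ha_def, ← hb_def, if_pos h, ← hd_def]
    have hc : 0 < (b / d) ^ ((1 : ℝ) / (p - 2)) := Real.rpow_pos_of_pos hbase _
    have hnw : ‖w‖ = (b / d) ^ ((1 : ℝ) / (p - 2)) * a := by
      rw [hw, norm_smul, Real.norm_eq_abs, abs_of_pos hc]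
    have hne : p - 2 ≠ 0 := by linarith
    have hwp : ‖w‖ ^ (p - 2) = (b / d) * a ^ (p - 2) := by
      rw [hnw, Real.mul_rpow hc.le ha.le, ← Real.rpow_mul hbase.le,
        one_div_mul_cancel hne, Real.rpow_one]
    rw [hwp]
    have hdb : b / d * d = b := div_mul_cancel₀ b hd.ne'
    have hr0 : 0 ≤ b / d := hbase.le
    have hr1 : (2 - p) * (b / d) ≤ 1 := by
      rw [mul_div_assoc'] at *
      exact (div_le_one hd).2 (by nlinarith)
    nlinarith [mul_nonneg hA.le (sub_nonneg.2 hsq),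
      mul_nonneg (mul_nonneg (sub_nonneg.2 hr1) hA.le) hs]
  · have hw : w = x := by simp only [w, ← ha_def, ← hb_def, if_neg h]
    rw [hw]
    nlinarith [mul_nonneg hA.le (sub_nonneg.2 hsq),
      mul_nonneg (mul_nonneg (by linarith : (0:ℝ) ≤ p - 1) hs) hA.le]
end

section
/- For $1<p<2$ there exists a constant $c(p)>0$ such that for all $x,y\in\mathbb{R}^N$ with $x\ne 0$: $p|x|^{p-2}|y|^2+p(p-2)|\tilde\omega(x,x+y)|^{p-2}(|x|-|x+y|)^2\ge c(p)\frac{|x|}{|x|+|y|}|x|^{p-2}|y|^2$, where $\tilde\omega(x,x+y)=\big(\frac{|x+y|}{(2-p)|x+y|+(p-1)|x|}\big)^{1/(p-2)}x$ if $|x|<|x+y|$ and $\tilde\omega(x,x+y)=x$ otherwise. -/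
open Real

lemma key_ineq (p a b t : ℝ) (hp1 : 1 < p) (hp2 : p < 2) (ha : 0 < a) (ht : 0 ≤ t)
    (hbat : b - a ≤ t) (hab : a < b) :
    (p - 1) * (a / (a + t)) * t ^ 2 ≤
      t ^ 2 + (p - 2) * (b / ((2 - p) * b + (p - 1) * a)) * (b - a) ^ 2 := by
  have hb : 0 < b := ha.trans hab
  have hD : 0 < (2 - p) * b + (p - 1) * a := by nlinarith
  have hat : 0 < a + t := by linarith
  set D := (2 - p) * b + (p - 1) * a with hDdef
  have expand : t ^ 2 + (p - 2) * (b / D) * (b - a) ^ 2 - (p - 1) * (a / (a + t)) * t ^ 2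
      = ((t ^ 2 * D + (p - 2) * b * (b - a) ^ 2) * (a + t) - (p - 1) * a * t ^ 2 * D)
        / (D * (a + t)) := by
    field_simp
  have hsq : (b - a) ^ 2 ≤ t ^ 2 := by nlinarith
  have hDat : D ≤ a + t := by rw [hDdef]; nlinarith
  have hnum : 0 ≤ (t ^ 2 * D + (p - 2) * b * (b - a) ^ 2) * (a + t) - (p - 1) * a * t ^ 2 * D := by
    have h1 : (p - 1) * a * t ^ 2 ≤ t ^ 2 * D + (p - 2) * b * (b - a) ^ 2 := by
      have : (2 - p) * b * (b - a) ^ 2 ≤ (2 - p) * b * t ^ 2 :=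
        mul_le_mul_of_nonneg_left hsq (by nlinarith)
      nlinarith
    have h2 : (p - 1) * a * t ^ 2 * D ≤ (p - 1) * a * t ^ 2 * (a + t) :=
      mul_le_mul_of_nonneg_left hDat
        (mul_nonneg (mul_nonneg (by linarith : (0:ℝ) ≤ p - 1) ha.le) (sq_nonneg t))
    nlinarith [mul_le_mul_of_nonneg_right h1 hat.le]
  have := div_nonneg hnum (by positivity : (0:ℝ) ≤ D * (a + t))
  linarith [expand ▸ this]

theorem tilde_omega_lower_bound (N : ℕ) (hN : 1 ≤ N) (p : ℝ) (hp1 : 1 < p) (hp2 : p < 2) :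
    ∃ c : ℝ, 0 < c ∧ ∀ x y : EuclideanSpace ℝ (Fin N), x ≠ 0 →
      let w : EuclideanSpace ℝ (Fin N) :=
        if ‖x‖ < ‖x + y‖ then
          ((‖x + y‖ / ((2 - p) * ‖x + y‖ + (p - 1) * ‖x‖)) ^ ((1 : ℝ) / (p - 2))) • x
        else x
      p * ‖x‖ ^ (p - 2) * ‖y‖ ^ 2 + p * (p - 2) * ‖w‖ ^ (p - 2) * (‖x‖ - ‖x + y‖) ^ 2
        ≥ c * (‖x‖ / (‖x‖ + ‖y‖)) * ‖x‖ ^ (p - 2) * ‖y‖ ^ 2 := by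
  refine ⟨p * (p - 1), by nlinarith, ?_⟩
  intro x y hx
  dsimp only
  set a := ‖x‖ with ha_def
  set b := ‖x + y‖ with hb_def
  set t := ‖y‖ with ht_def
  have ha : 0 < a := norm_pos_iff.2 hx
  have hb : 0 ≤ b := norm_nonneg _
  have ht : 0 ≤ t := norm_nonneg _
  have htri : |a - b| ≤ t := by
    have h1 : x - (x + y) = -y := by abel
    calc |a - b| ≤ ‖x - (x + y)‖ := abs_norm_sub_norm_le _ _
      _ = t := by rw [h1, norm_neg]
  have hA : (0 : ℝ) < a ^ (p - 2) := Real.rpow_pos_of_pos ha _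
  have hat : 0 < a + t := by linarith
  have hfrac : a / (a + t) ≤ 1 := by rw [div_le_one hat]; linarith
  have hfrac0 : 0 ≤ a / (a + t) := by positivity
  split_ifs with h
  · -- case a < b
    have hbpos : 0 < b := ha.trans h
    have hD : 0 < (2 - p) * b + (p - 1) * a := by nlinarith
    have hs0 : (0:ℝ) ≤ (b / ((2 - p) * b + (p - 1) * a)) ^ ((1:ℝ) / (p - 2)) :=
      Real.rpow_nonneg (by positivity) _
    have hnw : ‖((b / ((2 - p) * b + (p - 1) * a)) ^ ((1:ℝ) / (p - 2))) • x‖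
        = (b / ((2 - p) * b + (p - 1) * a)) ^ ((1:ℝ) / (p - 2)) * a := by
      rw [norm_smul, Real.norm_eq_abs, abs_of_nonneg hs0]
    rw [hnw, Real.mul_rpow hs0 ha.le,
      ← Real.rpow_mul (by positivity : (0:ℝ) ≤ b / ((2 - p) * b + (p - 1) * a)),
      one_div_mul_cancel (sub_ne_zero.2 hp2.ne), Real.rpow_one]
    have hbat : b - a ≤ t := by
      have := (abs_le.1 htri).1
      linarith
    have K := key_ineq p a b t hp1 hp2 ha ht hbat h
    have hpA : (0:ℝ) ≤ p * a ^ (p - 2) := by positivity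
    have := mul_le_mul_of_nonneg_left K hpA
    nlinarith [this]
  · -- case b ≤ a
    push_neg at h
    have hsq : (a - b) ^ 2 ≤ t ^ 2 := by nlinarith [abs_le.1 htri, sq_abs (a - b)]
    have hneg : p * (p - 2) * a ^ (p - 2) ≤ 0 := by
      nlinarith [mul_pos (mul_pos (show (0:ℝ) < p by linarith)
        (show (0:ℝ) < 2 - p by linarith)) hA]
    have h1 := mul_le_mul_of_nonpos_left hsq hneg
    have hp0 : (0:ℝ) ≤ p * (p - 1) := by nlinarith
    have h2 : p * (p - 1) * (a / (a + t)) * a ^ (p - 2) * t ^ 2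
        ≤ p * (p - 1) * a ^ (p - 2) * t ^ 2 := by
      have := mul_le_mul_of_nonneg_left hfrac
        (mul_nonneg (mul_nonneg hp0 hA.le) (sq_nonneg t))
      nlinarith [this]
    have h3 : p * a ^ (p - 2) * t ^ 2 + p * (p - 2) * a ^ (p - 2) * t ^ 2
        = p * (p - 1) * a ^ (p - 2) * t ^ 2 := by ring
    linarith [h1, h2, h3]
end

section
/- Let $1<p<2$ and $\tilde\omega$ as in the Felli–Zhang decomposition: $\tilde\omega(x,x+y)=\big(\frac{|x+y|}{(2-p)|x+y|+(p-1)|x|}\big)^{1/(p-2)}x$ if $|x|<|x+y|$, and $\tilde\omega(x,x+y)=x$ otherwise. Then $|\tilde\omega(x,x+y)|^{p-2}\le\frac{|x|^{p-2}}{2-p}$ for all $x\ne0$ and $y\in\mathbb{R}^N$. -/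
open Real

theorem tilde_omega_upper_bound (N : ℕ) (hN : 1 ≤ N) (p : ℝ) (hp1 : 1 < p) (hp2 : p < 2)
    (x y : EuclideanSpace ℝ (Fin N)) (hx : x ≠ 0) :
    let w : EuclideanSpace ℝ (Fin N) :=
      if ‖x‖ < ‖x + y‖ then
        ((‖x + y‖ / ((2 - p) * ‖x + y‖ + (p - 1) * ‖x‖)) ^ ((1 : ℝ) / (p - 2))) • x
      else x
    ‖w‖ ^ (p - 2) ≤ ‖x‖ ^ (p - 2) / (2 - p) := by
  intro w
  have hb : (0 : ℝ) < ‖x‖ := norm_pos_iff.mpr hx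
  have h2p : (0 : ℝ) < 2 - p := by linarith
  have hbp : (0 : ℝ) < ‖x‖ ^ (p - 2) := Real.rpow_pos_of_pos hb _
  by_cases hlt : ‖x‖ < ‖x + y‖
  · simp only [w, if_pos hlt]
    set a := ‖x + y‖ with ha
    set b := ‖x‖ with hbdef
    have ha0 : (0 : ℝ) < a := lt_trans hb hlt
    have hd : (0 : ℝ) < (2 - p) * a + (p - 1) * b := by
      have := mul_pos h2p ha0
      have := mul_pos (by linarith : (0:ℝ) < p - 1) hb
      linarith
    set r := a / ((2 - p) * a + (p - 1) * b) with hr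
    have hr0 : (0 : ℝ) < r := div_pos ha0 hd
    have hc0 : (0 : ℝ) < r ^ ((1 : ℝ) / (p - 2)) := Real.rpow_pos_of_pos hr0 _
    have hnorm : ‖(r ^ ((1 : ℝ) / (p - 2))) • x‖ = r ^ ((1 : ℝ) / (p - 2)) * b := by
      rw [norm_smul, Real.norm_eq_abs, abs_of_pos hc0]
    have hp2ne : p - 2 ≠ 0 := by linarith
    rw [hnorm, Real.mul_rpow hc0.le hb.le, ← Real.rpow_mul hr0.le, one_div,
      inv_mul_cancel₀ hp2ne, Real.rpow_one]
    have hrle : r ≤ 1 / (2 - p) := by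
      rw [hr, div_le_div_iff₀ hd h2p]
      nlinarith [mul_pos (by linarith : (0:ℝ) < p - 1) hb]
    calc r * b ^ (p - 2) ≤ (1 / (2 - p)) * b ^ (p - 2) :=
          mul_le_mul_of_nonneg_right hrle hbp.le
      _ = b ^ (p - 2) / (2 - p) := by ring
  · simp only [w, if_neg hlt]
    rw [le_div_iff₀ h2p]
    nlinarith [hbp]
end

section
/- Let $a,b\in\mathbb{R}$ and $r>2$. For any $\kappa>0$ there exists $C=C(r,\kappa)>0$ such that $|a+b|^{r}\le |a|^{r}+r|a|^{r-2}ab+\big(\tfrac{r(r-1)}{2}+\kappa\big)|a|^{r-2}b^2+C|b|^{r}$. -/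
open Real


lemma taylor_aux (r κ : ℝ) (hr : 2 < r) (hκ : 0 < κ) :
    ∃ δ : ℝ, 0 < δ ∧ δ < 1 ∧ ∀ t : ℝ, |t| ≤ δ →
      (1 + t) ^ r ≤ 1 + r * t + (r * (r - 1) / 2 + κ) * t ^ 2 := by
  have hr0 : (0:ℝ) < r := by linarith
  have hr1 : (1:ℝ) < r - 1 := by linarith
  have hr2 : (0:ℝ) < r - 2 := by linarith
  have hrr : (0:ℝ) < r * (r - 1) := by nlinarith
  set K : ℝ := r * (r - 1) / 2 + κ with hK
  set ε : ℝ := 1 + 2 * κ / (r * (r - 1)) with hε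
  have hε1 : 1 < ε := by
    have h : 0 < 2 * κ / (r * (r - 1)) := by positivity
    rw [hε]; linarith
  set δ : ℝ := min (1/2) (ε ^ (r - 2)⁻¹ - 1) with hδdef
  have hεr : 1 < ε ^ (r - 2)⁻¹ := by
    rw [Real.one_lt_rpow_iff (by linarith)]
    exact Or.inl ⟨hε1, by positivity⟩
  have hδ0 : 0 < δ := lt_min (by norm_num) (by linarith)
  have hδ1 : δ < 1 := lt_of_le_of_lt (min_le_left _ _) (by norm_num)
  refine ⟨δ, hδ0, hδ1, ?_⟩
  -- key: for |t| ≤ δ, (1+t)^(r-2) ≤ ε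
  have hbound : ∀ t : ℝ, |t| ≤ δ → (1 + t) ^ (r - 2) ≤ ε := by
    intro t ht
    have ht' : t ≤ δ := le_trans (le_abs_self t) ht
    have h1t : 0 ≤ 1 + t := by
      have := abs_le.mp ht
      linarith
    have : (1 + t) ^ (r - 2) ≤ (ε ^ (r - 2)⁻¹) ^ (r - 2) := by
      apply Real.rpow_le_rpow h1t _ (le_of_lt hr2)
      have := min_le_right (1/2 : ℝ) (ε ^ (r - 2)⁻¹ - 1)
      have : δ ≤ ε ^ (r - 2)⁻¹ - 1 := min_le_right _ _
      linarith
    rwa [Real.rpow_inv_rpow (by linarith) (ne_of_gt hr2)] at this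
  -- derivatives
  have hpos : ∀ t : ℝ, |t| ≤ δ → 0 < 1 + t := by
    intro t ht
    have := abs_le.mp ht
    linarith
  set φ : ℝ → ℝ := fun t => r + 2 * K * t - r * (1 + t) ^ (r - 1) with hφdef
  set g : ℝ → ℝ := fun t => 1 + r * t + K * t ^ 2 - (1 + t) ^ r with hgdef
  have hg' : ∀ t : ℝ, 0 < 1 + t → HasDerivAt g (φ t) t := by
    intro t ht
    have h1 : HasDerivAt (fun y : ℝ => 1 + y) 1 t := (hasDerivAt_id t).const_add 1
    have h2 : HasDerivAt (fun y : ℝ => (1 + y) ^ r) (1 * r * (1 + t) ^ (r - 1)) t :=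
      h1.rpow_const (Or.inl (ne_of_gt ht))
    have h3 : HasDerivAt (fun y : ℝ => 1 + r * y + K * y ^ 2)
        (0 + r * 1 + K * (2 * t)) t := by
      have := ((hasDerivAt_id t).const_mul r)
      have hsq : HasDerivAt (fun y : ℝ => y ^ 2) (2 * t) t := by
        simpa using (hasDerivAt_pow 2 t)
      exact ((hasDerivAt_const t (1:ℝ)).add ((hasDerivAt_id t).const_mul r)).add
        (hsq.const_mul K)
    have := h3.sub h2
    refine this.congr_deriv ?_
    ring
  have hφ' : ∀ t : ℝ, 0 < 1 + t →
      HasDerivAt φ (2 * K - r * ((r - 1) * (1 + t) ^ (r - 2))) t := by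
    intro t ht
    have h1 : HasDerivAt (fun y : ℝ => 1 + y) 1 t := (hasDerivAt_id t).const_add 1
    have h2 : HasDerivAt (fun y : ℝ => (1 + y) ^ (r - 1)) (1 * (r - 1) * (1 + t) ^ (r - 1 - 1)) t :=
      h1.rpow_const (Or.inl (ne_of_gt ht))
    have h3 : HasDerivAt (fun y : ℝ => r + 2 * K * y) (0 + 2 * K * 1) t :=
      (hasDerivAt_const t r).add ((hasDerivAt_id t).const_mul (2 * K))
    have := h3.sub (h2.const_mul r)
    refine this.congr_deriv ?_
    have : r - 1 - 1 = r - 2 := by ring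
    rw [this]; ring
  -- φ is monotone on [-δ, δ]
  have hmemD : ∀ x ∈ Set.Icc (-δ) δ, |x| ≤ δ := fun x hx => abs_le.mpr ⟨hx.1, hx.2⟩
  have hφmono : MonotoneOn φ (Set.Icc (-δ) δ) := by
    apply monotoneOn_of_deriv_nonneg (convex_Icc _ _)
    · intro x hx
      exact ((hφ' x (hpos x (hmemD x hx))).continuousAt).continuousWithinAt
    · intro x hx
      rw [interior_Icc] at hx
      have := hpos x (hmemD x ⟨le_of_lt hx.1, le_of_lt hx.2⟩)
      exact ((hφ' x this).differentiableAt).differentiableWithinAt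
    · intro x hx
      rw [interior_Icc] at hx
      have hx' : |x| ≤ δ := abs_le.mpr ⟨le_of_lt hx.1, le_of_lt hx.2⟩
      rw [(hφ' x (hpos x hx')).deriv]
      have h1 : r * (r - 1) * (1 + x) ^ (r - 2) ≤ r * (r - 1) * ε :=
        mul_le_mul_of_nonneg_left (hbound x hx') hrr.le
      have h2 : r * (r - 1) * ε = r * (r - 1) + 2 * κ := by
        rw [hε]; field_simp
      rw [hK] at *
      nlinarith [h1, h2]
  have hφ0 : φ 0 = 0 := by
    simp [hφdef, Real.one_rpow]
  -- g antitone on [-δ, 0], monotone on [0, δ]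
  have hganti : AntitoneOn g (Set.Icc (-δ) 0) := by
    apply antitoneOn_of_deriv_nonpos (convex_Icc _ _)
    · intro x hx
      have hx' : |x| ≤ δ := abs_le.mpr ⟨hx.1, le_trans hx.2 (le_of_lt hδ0)⟩
      exact ((hg' x (hpos x hx')).continuousAt).continuousWithinAt
    · intro x hx
      rw [interior_Icc] at hx
      have hx' : |x| ≤ δ := abs_le.mpr ⟨le_of_lt hx.1, le_trans (le_of_lt hx.2) (le_of_lt hδ0)⟩
      exact ((hg' x (hpos x hx')).differentiableAt).differentiableWithinAt
    · intro x hx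
      rw [interior_Icc] at hx
      have hx' : |x| ≤ δ := abs_le.mpr ⟨le_of_lt hx.1, le_trans (le_of_lt hx.2) (le_of_lt hδ0)⟩
      rw [(hg' x (hpos x hx')).deriv]
      have : φ x ≤ φ 0 := hφmono ⟨(abs_le.mp hx').1, (abs_le.mp hx').2⟩
        ⟨by linarith, le_of_lt hδ0⟩ (le_of_lt hx.2)
      linarith [hφ0 ▸ this]
  have hgmono : MonotoneOn g (Set.Icc 0 δ) := by
    apply monotoneOn_of_deriv_nonneg (convex_Icc _ _)
    · intro x hx
      have hx' : |x| ≤ δ := abs_le.mpr ⟨le_trans (by linarith [hδ0]) hx.1, hx.2⟩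
      exact ((hg' x (hpos x hx')).continuousAt).continuousWithinAt
    · intro x hx
      rw [interior_Icc] at hx
      have hx' : |x| ≤ δ := abs_le.mpr ⟨by linarith [hδ0, hx.1], le_of_lt hx.2⟩
      exact ((hg' x (hpos x hx')).differentiableAt).differentiableWithinAt
    · intro x hx
      rw [interior_Icc] at hx
      have hx' : |x| ≤ δ := abs_le.mpr ⟨by linarith [hδ0, hx.1], le_of_lt hx.2⟩
      rw [(hg' x (hpos x hx')).deriv]
      have : φ 0 ≤ φ x := hφmono ⟨by linarith, le_of_lt hδ0⟩
        ⟨(abs_le.mp hx').1, (abs_le.mp hx').2⟩ (le_of_lt hx.1)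
      linarith [hφ0 ▸ this]
  have hg0 : g 0 = 0 := by
    simp [hgdef, Real.one_rpow]
  intro t ht
  have habs := abs_le.mp ht
  have hgt : 0 ≤ g t := by
    rcases le_total t 0 with h | h
    · have := hganti ⟨habs.1, h⟩ ⟨le_of_lt (neg_lt_zero.mpr hδ0), le_refl 0⟩ h
      linarith [hg0 ▸ this]
    · have := hgmono ⟨le_refl 0, le_of_lt hδ0⟩ ⟨h, habs.2⟩ h
      linarith [hg0 ▸ this]
  simp only [hgdef] at hgt
  linarith

theorem scalar_expansion_r_gt_two (r κ : ℝ) (hr : 2 < r) (hκ : 0 < κ) :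
    ∃ C : ℝ, 0 < C ∧ ∀ a b : ℝ,
      |a + b| ^ r ≤ |a| ^ r + r * |a| ^ (r - 2) * a * b
        + (r * (r - 1) / 2 + κ) * |a| ^ (r - 2) * b ^ 2 + C * |b| ^ r := by
  obtain ⟨δ, hδ0, hδ1, hT⟩ := taylor_aux r κ hr hκ
  have hr0 : (0:ℝ) < r := by linarith
  have hK0 : (0:ℝ) ≤ r * (r - 1) / 2 + κ := by nlinarith
  refine ⟨(1 + 1/δ) ^ r + r / δ ^ (r-1), by positivity, ?_⟩
  intro a b
  rcases le_or_gt |b| (δ * |a|) with hcase | hcase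
  · -- small b
    rcases eq_or_ne a 0 with ha | ha
    · have hb : b = 0 := by
        have : |b| ≤ 0 := by simpa [ha] using hcase
        simpa using le_antisymm this (abs_nonneg b)
      subst ha; subst hb
      simp [Real.zero_rpow (ne_of_gt hr0), Real.zero_rpow (by linarith : r - 2 ≠ 0)]
    · set t : ℝ := b / a with ht
      have hta : |t| ≤ δ := by
        rw [ht, abs_div]
        exact (div_le_iff₀ (abs_pos.mpr ha)).mpr (by linarith)
      have h1t : 0 < 1 + t := by
        have := abs_le.mp hta
        linarith
      have key := hT t hta
      have heq : |a + b| ^ r = |a| ^ r * (1 + t) ^ r := by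
        have hab : a + b = a * (1 + t) := by rw [ht]; field_simp
        rw [hab, abs_mul, abs_of_pos h1t, Real.mul_rpow (abs_nonneg a) h1t.le]
      have hsq : |a| ^ r = |a| ^ (r - 2) * a ^ 2 := by
        rw [show r = (r - 2) + 2 by ring, Real.rpow_add (abs_pos.mpr ha),
          show ((2:ℝ)) = ((2:ℕ):ℝ) by norm_num, Real.rpow_natCast, sq_abs]
        ring_nf
      have hmul : |a| ^ r * (1 + t) ^ r ≤ |a| ^ r * (1 + r * t + (r * (r - 1) / 2 + κ) * t ^ 2) :=
        mul_le_mul_of_nonneg_left key (Real.rpow_nonneg (abs_nonneg a) r)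
      have hexp : |a| ^ r * (1 + r * t + (r * (r - 1) / 2 + κ) * t ^ 2)
          = |a| ^ r + r * |a| ^ (r - 2) * a * b
            + (r * (r - 1) / 2 + κ) * |a| ^ (r - 2) * b ^ 2 := by
        rw [hsq, ht]
        field_simp
      have hC : 0 ≤ ((1 + 1/δ) ^ r + r / δ ^ (r-1)) * |b| ^ r := by positivity
      rw [heq]
      linarith [hmul, hexp ▸ hmul]
  · -- large b
    have hb0 : 0 < |b| := lt_of_le_of_lt (by positivity) hcase
    have ha_lt : |a| ≤ |b| / δ := le_of_lt ((lt_div_iff₀ hδ0).mpr (by linarith))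
    have hL : |a + b| ^ r ≤ (1 + 1/δ) ^ r * |b| ^ r := by
      calc |a + b| ^ r ≤ ((1 + 1/δ) * |b|) ^ r := by
            apply Real.rpow_le_rpow (abs_nonneg _) _ hr0.le
            have := abs_add_le a b
            have h2 : (1 + 1/δ) * |b| = |b| / δ + |b| := by field_simp; ring
            rw [h2]
            linarith
        _ = (1 + 1/δ) ^ r * |b| ^ r := Real.mul_rpow (by positivity) (abs_nonneg _)
    have e1 : |a| ^ (r - 2) * |a| = |a| ^ (r - 1) := by
      rw [show r - 1 = (r - 2) + 1 by ring,
        Real.rpow_add_of_nonneg (abs_nonneg a) (by linarith) zero_le_one, Real.rpow_one]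
    have e2 : |a| ^ (r - 1) ≤ |b| ^ (r - 1) / δ ^ (r - 1) := by
      rw [← Real.div_rpow (abs_nonneg b) hδ0.le]
      exact Real.rpow_le_rpow (abs_nonneg a) ha_lt (by linarith)
    have e3 : |b| ^ (r - 1) * |b| = |b| ^ r := by
      rw [show r = (r - 1) + 1 by ring,
        Real.rpow_add_of_nonneg (abs_nonneg b) (by linarith) zero_le_one, Real.rpow_one]
      ring_nf
    have h4 : -(|a| ^ (r - 2) * |a| * |b|) ≤ |a| ^ (r - 2) * a * b := by
      have hneg := neg_abs_le (|a| ^ (r - 2) * a * b)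
      have habs : |(|a| ^ (r - 2) * a * b)| = |a| ^ (r - 2) * |a| * |b| := by
        rw [abs_mul, abs_mul, abs_of_nonneg (Real.rpow_nonneg (abs_nonneg a) _)]
      rw [habs] at hneg
      exact hneg
    have e5 : |a| ^ (r - 1) * |b| ≤ |b| ^ r / δ ^ (r - 1) := by
      calc |a| ^ (r - 1) * |b| ≤ |b| ^ (r - 1) / δ ^ (r - 1) * |b| :=
            mul_le_mul_of_nonneg_right e2 (abs_nonneg b)
        _ = |b| ^ r / δ ^ (r - 1) := by rw [div_mul_eq_mul_div, e3]
    have h6 : -(|b| ^ r / δ ^ (r - 1)) ≤ |a| ^ (r - 2) * a * b := by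
      rw [e1] at h4
      linarith
    have h7 : -(r * (|b| ^ r / δ ^ (r - 1))) ≤ r * (|a| ^ (r - 2) * a * b) := by
      have := mul_le_mul_of_nonneg_left h6 hr0.le
      linarith
    have hA : 0 ≤ |a| ^ r := Real.rpow_nonneg (abs_nonneg a) r
    have hKt : 0 ≤ (r * (r - 1) / 2 + κ) * |a| ^ (r - 2) * b ^ 2 :=
      mul_nonneg (mul_nonneg hK0 (Real.rpow_nonneg (abs_nonneg a) _)) (sq_nonneg b)
    have hCdist : ((1 + 1/δ) ^ r + r / δ ^ (r-1)) * |b| ^ r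
        = (1 + 1/δ) ^ r * |b| ^ r + r * (|b| ^ r / δ ^ (r - 1)) := by ring
    linarith [hL, h7, hA, hKt, hCdist]
end

section
/- Let $1<r\le 2$ and $\kappa>0$. There exists $C=C(r,\kappa)>0$ such that for all real $a,b$ with $(a,b)\ne(0,0)$: $|a+b|^{r}\le |a|^{r}+r|a|^{r-2}ab+\big(\tfrac{r(r-1)}{2}+\kappa\big)\frac{(|a|+C|b|)^{r}}{a^2+b^2}b^{2}$. -/
open Real Set

private lemma rpow_aux_deriv (p x t : ℝ) (h : 0 < x + t) :
    HasDerivAt (fun s => (x + s) ^ p) (p * (x + t) ^ (p - 1)) t := by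
  have h1 : HasDerivAt (fun s : ℝ => x + s) 1 t := (hasDerivAt_id t).const_add x
  have := h1.rpow_const (p := p) (Or.inl h.ne')
  simpa using this

private lemma key_taylor (r : ℝ) (hr1 : 1 < r) (hr2 : r ≤ 2) (x y m : ℝ)
    (hm : 0 < m) (hmx : m ≤ x) (hmy : m ≤ x + y) :
    (x + y) ^ r ≤ x ^ r + r * x ^ (r - 1) * y + r * (r - 1) / 2 * m ^ (r - 2) * y ^ 2 := by
  have hx : 0 < x := lt_of_lt_of_le hm hmx
  have hrr : 0 < r * (r - 1) := by nlinarith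
  set h : ℝ → ℝ := fun t => x ^ r + r * x ^ (r - 1) * t
      + r * (r - 1) / 2 * m ^ (r - 2) * t ^ 2 - (x + t) ^ r with hhdef
  set h' : ℝ → ℝ := fun t => r * x ^ (r - 1) + r * (r - 1) * m ^ (r - 2) * t
      - r * (x + t) ^ (r - 1) with hh'def
  have hderiv : ∀ t : ℝ, 0 < x + t → HasDerivAt h (h' t) t := by
    intro t ht
    have h1 : HasDerivAt (fun s : ℝ => (x + s) ^ r) (r * (x + t) ^ (r - 1)) t :=
      rpow_aux_deriv r x t ht
    have ha : HasDerivAt (fun s : ℝ => s ^ 2) (2 * t) t := by simpa using hasDerivAt_pow 2 t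
    have h2 : HasDerivAt (fun s : ℝ => x ^ r + r * x ^ (r - 1) * s
        + r * (r - 1) / 2 * m ^ (r - 2) * s ^ 2)
        (r * x ^ (r - 1) + r * (r - 1) * m ^ (r - 2) * t) t := by
      have := (((hasDerivAt_id t).const_mul (r * x ^ (r-1))).const_add (x ^ r)).add
        (ha.const_mul (r * (r-1)/2 * m ^ (r-2)))
      refine this.congr_deriv ?_
      ring
    exact h2.sub h1
  have h0 : h 0 = 0 := by simp [hhdef]
  have hphi : ∀ t : ℝ, 0 < x + t →
      HasDerivAt (fun s => (x + s) ^ (r - 1)) ((r - 1) * (x + t) ^ (r - 2)) t := by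
    intro t ht
    have := rpow_aux_deriv (r - 1) x t ht
    simpa [show r - 1 - 1 = r - 2 by ring] using this
  have hrm2 : r - 2 ≤ 0 := by linarith
  have claim_pos : ∀ c : ℝ, 0 < c → 0 ≤ h' c := by
    intro c hc
    obtain ⟨d, hd, hslope⟩ := exists_hasDerivAt_eq_slope (fun s => (x + s) ^ (r - 1))
      (fun s => (r - 1) * (x + s) ^ (r - 2)) hc
      (fun s hs => ((hphi s (by rcases hs with ⟨h1, h2⟩; nlinarith)).continuousAt).continuousWithinAt)
      (fun s hs => hphi s (by rcases hs with ⟨h1, h2⟩; nlinarith))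
    have hxd : m ≤ x + d := by rcases hd with ⟨h1, h2⟩; nlinarith
    rw [eq_div_iff (by simp [hc.ne'] : c - 0 ≠ 0)] at hslope
    have heq : (x + c) ^ (r - 1) = x ^ (r - 1) + (r - 1) * (x + d) ^ (r - 2) * c := by
      rw [add_zero] at hslope; linarith [hslope]
    have hle : (x + d) ^ (r - 2) ≤ m ^ (r - 2) := rpow_le_rpow_of_nonpos hm hxd hrm2
    have hEq : h' c = r * (r - 1) * c * (m ^ (r - 2) - (x + d) ^ (r - 2)) := by
      simp only [hh'def, heq]; ring
    rw [hEq]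
    exact mul_nonneg (mul_nonneg hrr.le hc.le) (by linarith)
  have claim_neg : ∀ c : ℝ, c < 0 → m ≤ x + c → h' c ≤ 0 := by
    intro c hc hmc
    obtain ⟨d, hd, hslope⟩ := exists_hasDerivAt_eq_slope (fun s => (x + s) ^ (r - 1))
      (fun s => (r - 1) * (x + s) ^ (r - 2)) hc
      (fun s hs => ((hphi s (by rcases hs with ⟨h1, h2⟩; nlinarith)).continuousAt).continuousWithinAt)
      (fun s hs => hphi s (by rcases hs with ⟨h1, h2⟩; nlinarith))
    have hxd : m ≤ x + d := by rcases hd with ⟨h1, h2⟩; nlinarith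
    rw [eq_div_iff (by simp [hc.ne] : (0:ℝ) - c ≠ 0)] at hslope
    have heq : (x + c) ^ (r - 1) = x ^ (r - 1) + (r - 1) * (x + d) ^ (r - 2) * c := by
      rw [add_zero] at hslope; nlinarith [hslope]
    have hle : (x + d) ^ (r - 2) ≤ m ^ (r - 2) := rpow_le_rpow_of_nonpos hm hxd hrm2
    have hEq : h' c = r * (r - 1) * c * (m ^ (r - 2) - (x + d) ^ (r - 2)) := by
      simp only [hh'def, heq]; ring
    rw [hEq]
    nlinarith [mul_nonneg (mul_nonneg hrr.le (by linarith : 0 ≤ m ^ (r-2) - (x+d)^(r-2))) (neg_nonneg.2 hc.le)]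
  have key : 0 ≤ h y := by
    rcases lt_trichotomy y 0 with hy | hy | hy
    · obtain ⟨c, hc, hslope⟩ := exists_hasDerivAt_eq_slope h h' hy
        (fun s hs => ((hderiv s (by rcases hs with ⟨h1, h2⟩; nlinarith)).continuousAt).continuousWithinAt)
        (fun s hs => hderiv s (by rcases hs with ⟨h1, h2⟩; nlinarith))
      have hc' : h' c ≤ 0 := claim_neg c hc.2 (by rcases hc with ⟨h1, h2⟩; nlinarith)
      rw [h0, eq_div_iff (by simp [hy.ne] : (0:ℝ) - y ≠ 0)] at hslope
      nlinarith [hslope, mul_nonneg (neg_nonneg.2 hc') (neg_nonneg.2 hy.le)]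
    · simp [hhdef, hy]
    · obtain ⟨c, hc, hslope⟩ := exists_hasDerivAt_eq_slope h h' hy
        (fun s hs => ((hderiv s (by rcases hs with ⟨h1, h2⟩; nlinarith)).continuousAt).continuousWithinAt)
        (fun s hs => hderiv s (by rcases hs with ⟨h1, h2⟩; nlinarith))
      have hc' : 0 ≤ h' c := claim_pos c hc.1
      rw [h0, eq_div_iff (by simp [hy.ne'] : y - 0 ≠ 0)] at hslope
      nlinarith [hslope, mul_nonneg hc' hy.le]
  have := key
  simp only [hhdef] at this
  linarith

set_option maxHeartbeats 1600000 in
theorem scalar_expansion_r_le_two (r κ : ℝ) (hr1 : 1 < r) (hr2 : r ≤ 2) (hκ : 0 < κ) :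
    ∃ C : ℝ, 0 < C ∧ ∀ a b : ℝ, (a ≠ 0 ∨ b ≠ 0) →
      |a + b| ^ r ≤ |a| ^ r + r * |a| ^ (r - 2) * a * b
        + (r * (r - 1) / 2 + κ) * ((|a| + C * |b|) ^ r / (a ^ 2 + b ^ 2)) * b ^ 2 := by
  have hM : (0:ℝ) < r * (r - 1) / 2 + κ := by nlinarith
  obtain ⟨δ, hδ0, hδh, hδκ⟩ : ∃ δ : ℝ, 0 < δ ∧ δ ≤ 1/2 ∧ δ ≤ κ/3 :=
    ⟨min (1/2) (κ/3), by positivity, min_le_left _ _, min_le_right _ _⟩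
  obtain ⟨C, hC1, hMC⟩ : ∃ C : ℝ, 1 ≤ C ∧
      ((1 + 1/δ) ^ r + r * δ ^ (1 - r)) * (1 + 1/δ ^ 2) ≤ (r * (r - 1) / 2 + κ) * C ^ r := by
    refine ⟨max 1 ((((1 + 1/δ) ^ r + r * δ ^ (1 - r)) * (1 + 1/δ ^ 2)) / (r * (r - 1) / 2 + κ)),
      le_max_left _ _, ?_⟩
    generalize hKq : ((1 + 1/δ) ^ r + r * δ ^ (1 - r)) * (1 + 1/δ ^ 2) = K
    generalize hCq : max 1 (K / (r * (r - 1) / 2 + κ)) = C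
    have hC1 : 1 ≤ C := hCq ▸ le_max_left _ _
    have hC0 : 0 < C := lt_of_lt_of_le one_pos hC1
    have h1 : C ≤ C ^ r := by
      calc C = C ^ (1:ℝ) := (rpow_one C).symm
      _ ≤ C ^ r := rpow_le_rpow_of_exponent_le hC1 hr1.le
    have h2 : K / (r * (r - 1) / 2 + κ) ≤ C := hCq ▸ le_max_right _ _
    have h3 : K ≤ (r * (r - 1) / 2 + κ) * C := by
      rw [div_le_iff₀ hM] at h2; linarith
    nlinarith [mul_le_mul_of_nonneg_left h1 hM.le]
  have hC : 0 < C := lt_of_lt_of_le one_pos hC1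
  refine ⟨C, hC, ?_⟩
  suffices H : ∀ a b : ℝ, 0 ≤ a → (a ≠ 0 ∨ b ≠ 0) →
      |a + b| ^ r ≤ |a| ^ r + r * |a| ^ (r - 2) * a * b
        + (r * (r - 1) / 2 + κ) * ((|a| + C * |b|) ^ r / (a ^ 2 + b ^ 2)) * b ^ 2 by
    intro a b hab
    rcases le_or_gt 0 a with ha | ha
    · exact H a b ha hab
    · have key := H (-a) (-b) (by linarith) (Or.inl (neg_ne_zero.mpr ha.ne))
      simp only [show (-a) + (-b) = -(a+b) from by ring, abs_neg, neg_sq,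
        mul_neg, neg_mul, neg_neg] at key
      exact key
  intro a b ha hab
  have habs : |a| = a := abs_of_nonneg ha
  by_cases hcase : |b| ≤ δ * a
  -- Regime 1 : |b| ≤ δ a
  · have ha0 : 0 < a := by
      rcases ha.lt_or_eq with h | h
      · exact h
      · exfalso
        have hb0 : b = 0 := by
          have : |b| ≤ 0 := by rw [← h] at hcase; simpa using hcase
          simpa using le_antisymm this (abs_nonneg b)
        rcases hab with h' | h' <;> simp_all
    have hm : 0 < (1 - δ) * a := by nlinarith
    have hmx : (1 - δ) * a ≤ a := by nlinarith
    have hmy : (1 - δ) * a ≤ a + b := by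
      have := neg_abs_le b; nlinarith
    have hab' : 0 < a + b := lt_of_lt_of_le hm hmy
    have key := key_taylor r hr1 hr2 a b ((1 - δ) * a) hm hmx hmy
    rw [habs, abs_of_pos hab']
    have hid : r * a ^ (r - 2) * a * b = r * a ^ (r - 1) * b := by
      rw [show r - 1 = (r - 2) + 1 from by ring, rpow_add_one ha0.ne']
      ring
    rw [hid]
    have hA : (0:ℝ) < a ^ (r - 2) := rpow_pos_of_pos ha0 _
    have c1 : ((1 - δ) * a) ^ (r - 2) = (1 - δ) ^ (r - 2) * a ^ (r - 2) :=
      mul_rpow (by linarith) ha0.le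
    have c2 : (1 - δ) ^ (r - 2) ≤ (1 - δ)⁻¹ := by
      have := rpow_le_rpow_of_exponent_ge (x := 1 - δ) (by linarith) (by linarith)
        (show (-1:ℝ) ≤ r - 2 by linarith)
      rwa [rpow_neg_one] at this
    have c3 : a ^ 2 + b ^ 2 ≤ (1 + δ ^ 2) * a ^ 2 := by
      nlinarith [sq_abs b, mul_self_le_mul_self (abs_nonneg b) hcase]
    have c4 : a ^ r ≤ (a + C * |b|) ^ r :=
      rpow_le_rpow ha0.le (le_add_of_nonneg_right (by positivity)) (by linarith)
    have c5 : a ^ r = a ^ (r - 2) * a ^ 2 := by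
      rw [← rpow_natCast a 2, ← rpow_add ha0]
      norm_num
    have hkey : r * (r - 1) / 2 * (1 + δ ^ 2) ≤ (r * (r - 1) / 2 + κ) * (1 - δ) := by
      have hP1 : r * (r - 1) / 2 ≤ 1 := by nlinarith
      have hP0 : 0 < r * (r - 1) / 2 := by nlinarith
      have hδ2 : δ ^ 2 ≤ δ / 2 := by nlinarith
      nlinarith
    have R : r * (r - 1) / 2 * ((1 - δ) * a) ^ (r - 2) * b ^ 2
        ≤ (r * (r - 1) / 2 + κ) * ((a + C * |b|) ^ r / (a ^ 2 + b ^ 2)) * b ^ 2 := by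
      have hP0 : 0 < r * (r - 1) / 2 := by nlinarith
      have s1 : r * (r - 1) / 2 * ((1 - δ) * a) ^ (r - 2)
          ≤ r * (r - 1) / 2 * ((1 - δ)⁻¹ * a ^ (r - 2)) := by
        rw [c1]
        have := mul_le_mul_of_nonneg_right c2 hA.le
        nlinarith
      have s2 : r * (r - 1) / 2 * ((1 - δ)⁻¹ * a ^ (r - 2))
          ≤ (r * (r - 1) / 2 + κ) * (a ^ (r - 2) / (1 + δ ^ 2)) := by
        have h1δ : (0:ℝ) < 1 - δ := by linarith
        have h1δ2 : (0:ℝ) < 1 + δ ^ 2 := by positivity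
        rw [show r * (r - 1) / 2 * ((1 - δ)⁻¹ * a ^ (r - 2))
            = r * (r - 1) / 2 * a ^ (r - 2) / (1 - δ) from by field_simp,
          show (r * (r - 1) / 2 + κ) * (a ^ (r - 2) / (1 + δ ^ 2))
            = (r * (r - 1) / 2 + κ) * a ^ (r - 2) / (1 + δ ^ 2) from by ring,
          div_le_div_iff₀ h1δ h1δ2]
        nlinarith [mul_le_mul_of_nonneg_right hkey hA.le]
      have s3 : a ^ (r - 2) / (1 + δ ^ 2) ≤ (a + C * |b|) ^ r / (a ^ 2 + b ^ 2) := by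
        have : a ^ (r - 2) / (1 + δ ^ 2) = a ^ r / ((1 + δ ^ 2) * a ^ 2) := by
          rw [c5]; field_simp
        rw [this]
        exact div_le_div₀ (rpow_nonneg (by positivity) r) c4 (by positivity) c3
      have hb2 : (0:ℝ) ≤ b ^ 2 := sq_nonneg b
      have := mul_le_mul_of_nonneg_right (le_trans s1 (le_trans s2
        (mul_le_mul_of_nonneg_left s3 hM.le))) hb2
      linarith
    linarith [key, R]
  -- Regime 2 : δ a < |b|
  · push_neg at hcase
    have hbpos : 0 < |b| := lt_of_le_of_lt (by positivity) hcase
    have hbr : 0 < |b| ^ r := rpow_pos_of_pos hbpos r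
    have hb2 : (0:ℝ) < b ^ 2 := by
      have := sq_abs b; nlinarith
    rw [habs]
    have t1 : |a + b| ≤ (1 + 1/δ) * |b| := by
      have h1 := abs_add_le a b
      have h2 : a ≤ |b| / δ := by
        rw [le_div_iff₀ hδ0]; nlinarith
      rw [habs] at h1
      have h3 : |b| / δ = (1/δ) * |b| := by ring
      nlinarith [h3]
    have t1' : |a + b| ^ r ≤ (1 + 1/δ) ^ r * |b| ^ r := by
      rw [← mul_rpow (by positivity) (abs_nonneg b)]
      exact rpow_le_rpow (abs_nonneg _) t1 (by linarith)
    have t2 : -(r * δ ^ (1 - r) * |b| ^ r) ≤ r * a ^ (r - 2) * a * b := by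
      rcases ha.lt_or_eq with ha0 | ha0
      · have hid : r * a ^ (r - 2) * a * b = r * a ^ (r - 1) * b := by
          rw [show r - 1 = (r - 2) + 1 from by ring, rpow_add_one ha0.ne']
          ring
        rw [hid]
        have har : 0 ≤ a ^ (r - 1) := (rpow_pos_of_pos ha0 _).le
        have h2 : a ≤ |b| / δ := by rw [le_div_iff₀ hδ0]; nlinarith
        have h3 : a ^ (r - 1) ≤ (|b| / δ) ^ (r - 1) :=
          rpow_le_rpow ha0.le h2 (by linarith)
        have h4 : (|b| / δ) ^ (r - 1) = |b| ^ (r - 1) * δ ^ (1 - r) := by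
          rw [div_rpow (abs_nonneg b) hδ0.le, show (1 - r) = -(r-1) from by ring,
            rpow_neg hδ0.le]
          ring
        have h5 : |b| ^ (r - 1) * |b| = |b| ^ r := by
          rw [← rpow_add_one hbpos.ne' (r - 1)]; norm_num
        have h6 : -(a ^ (r - 1) * |b|) ≤ a ^ (r - 1) * b := by
          nlinarith [neg_abs_le b]
        have h7 : a ^ (r - 1) * |b| ≤ |b| ^ (r - 1) * δ ^ (1 - r) * |b| := by
          nlinarith [h3, h4, hbpos.le]
        have h5' : |b| ^ (r - 1) * δ ^ (1 - r) * |b| = δ ^ (1 - r) * |b| ^ r := by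
          rw [show |b| ^ (r - 1) * δ ^ (1 - r) * |b| = δ ^ (1 - r) * (|b| ^ (r - 1) * |b|) from by
            ring, h5]
        have h8 : -(δ ^ (1 - r) * |b| ^ r) ≤ a ^ (r - 1) * b := by linarith
        have h9 := mul_le_mul_of_nonneg_left h8 (show (0:ℝ) ≤ r by linarith)
        linarith [h9]
      · rw [← ha0]
        have : (0:ℝ) ≤ r * δ ^ (1 - r) * |b| ^ r := by positivity
        simp
        linarith [this]
    have t3 : (r * (r - 1) / 2 + κ) * C ^ r * |b| ^ r / (1 + 1/δ ^ 2)
        ≤ (r * (r - 1) / 2 + κ) * ((a + C * |b|) ^ r / (a ^ 2 + b ^ 2)) * b ^ 2 := by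
      have n1 : (C * |b|) ^ r ≤ (a + C * |b|) ^ r :=
        rpow_le_rpow (by positivity) (by nlinarith [mul_nonneg hC.le (abs_nonneg b)]) (by linarith)
      have n1' : (C * |b|) ^ r = C ^ r * |b| ^ r := mul_rpow hC.le (abs_nonneg b)
      have n2 : a ^ 2 + b ^ 2 ≤ (1 + 1/δ ^ 2) * b ^ 2 := by
        have hh : a * δ ≤ |b| := by nlinarith
        have hh2 : a ^ 2 * δ ^ 2 ≤ b ^ 2 := by
          nlinarith [sq_abs b, mul_self_le_mul_self (by positivity : (0:ℝ) ≤ a * δ) hh]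
        have hδ2 : (0:ℝ) < δ ^ 2 := by positivity
        rw [show (1 + 1/δ^2) * b^2 = b^2 + b^2/δ^2 from by field_simp]
        have : a ^ 2 ≤ b ^ 2 / δ ^ 2 := by rw [le_div_iff₀ hδ2]; linarith
        linarith
      have s : C ^ r * |b| ^ r / ((1 + 1/δ ^ 2) * b ^ 2)
          ≤ (a + C * |b|) ^ r / (a ^ 2 + b ^ 2) := by
        refine div_le_div₀ (rpow_nonneg (by positivity) r) ?_ (by positivity) n2
        rw [← n1']; exact n1
      have hmm := mul_le_mul_of_nonneg_right (mul_le_mul_of_nonneg_left s hM.le) hb2.le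
      have heq : (r * (r - 1) / 2 + κ) * (C ^ r * |b| ^ r / ((1 + 1/δ ^ 2) * b ^ 2)) * b ^ 2
          = (r * (r - 1) / 2 + κ) * C ^ r * |b| ^ r / (1 + 1/δ ^ 2) := by
        have hb0 : b ≠ 0 := fun h => by simp [h] at hb2
        field_simp
      linarith [heq ▸ hmm]
    have final : ((1 + 1/δ) ^ r + r * δ ^ (1 - r)) * |b| ^ r
        ≤ (r * (r - 1) / 2 + κ) * C ^ r * |b| ^ r / (1 + 1/δ ^ 2) := by
      have hd : (0:ℝ) < 1 + 1/δ ^ 2 := by positivity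
      rw [le_div_iff₀ hd]
      nlinarith [mul_le_mul_of_nonneg_right hMC hbr.le]
    have har : 0 ≤ a ^ r := rpow_nonneg ha r
    nlinarith [t1', t2, t3, final, har]
end

section
/- Let $p\ge 2$ and $\kappa\in(0,1)$. There exists $C_1=C_1(p,\kappa)>0$ such that for all $x,y\in\mathbb{R}^N$ with $x\ne0$: $|x+y|^p\ge |x|^p+p|x|^{p-2}x\cdot y+\tfrac{1-\kappa}{2}\big(p|x|^{p-2}|y|^2+p(p-2)|\bar\omega|^{p-2}(|x|-|x+y|)^2\big)+C_1|y|^p$, where $\bar\omega=\bar\omega(x,x+y)$ equals $x$ if $|x|<|x+y|$ and $(|x+y|/|x|)^{1/(p-2)}(x+y)$ if $|x+y|\le|x|$. -/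
set_option maxHeartbeats 1000000

open Real
open scoped RealInnerProductSpace


lemma bern {q v : ℝ} (hq : 1 ≤ q) (hv : 0 ≤ v) : 1 + q * (v - 1) ≤ v ^ q := by
  have := one_add_mul_self_le_rpow_one_add (s := v - 1) (by linarith) hq
  simpa using this

lemma lemA {p a b : ℝ} (hp : 2 < p) (ha : 0 < a) (hab : a ≤ b) :
    p/2*(p-2)*a^(p-2)*(a-b)^2 ≤ b^p - a^p - p/2*a^(p-2)*(b^2-a^2) := by
  set A := a ^ (p-2) with hA
  set f : ℝ → ℝ := fun t => t ^ p - p/2*A*t^2 - p/2*(p-2)*A*(t-a)^2 with hf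
  have key : ∀ t ∈ Set.Ici a, HasDerivAt f
      (p * t^(p-1) - p/2*A*(2*t) - p/2*(p-2)*A*(2*(t-a))) t := by
    intro t ht
    have ht0 : t ≠ 0 := ne_of_gt (lt_of_lt_of_le ha ht)
    have h1 : HasDerivAt (fun t : ℝ => t ^ p) (p * t ^ (p-1)) t :=
      Real.hasDerivAt_rpow_const (Or.inl ht0)
    have h2 : HasDerivAt (fun t : ℝ => p/2*A*t^2) (p/2*A*(2*t)) t := by
      simpa using ((hasDerivAt_pow 2 t).const_mul (p/2*A))
    have h3 : HasDerivAt (fun t : ℝ => p/2*(p-2)*A*(t-a)^2) (p/2*(p-2)*A*(2*(t-a))) t := by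
      have := (((hasDerivAt_id t).sub_const a).pow 2).const_mul (p/2*(p-2)*A)
      simpa using this
    exact (h1.sub h2).sub h3
  have mono : MonotoneOn f (Set.Ici a) := by
    apply monotoneOn_of_deriv_nonneg (convex_Ici a)
    · exact fun t ht => (key t ht).continuousAt.continuousWithinAt
    · rw [interior_Ici]
      exact fun t ht => ((key t (Set.mem_Ici.mpr (le_of_lt ht))).differentiableAt).differentiableWithinAt
    · rw [interior_Ici]
      intro t ht
      rw [(key t (Set.mem_Ici.mpr (le_of_lt ht))).deriv]
      have ht0 : 0 < t := lt_trans ha ht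
      have hber : 1 + (p-1) * (t/a - 1) ≤ (t/a) ^ (p-1) := bern (by linarith) (by positivity)
      have htp : t ^ (p-1) = A * a * (t/a)^(p-1) := by
        have h1 : t = a * (t/a) := by field_simp
        have h2 : a^(p-1) = A * a := by
          rw [hA, ← Real.rpow_add_one (ne_of_gt ha) (p-2)]; ring_nf
        calc t ^ (p-1) = (a * (t/a)) ^ (p-1) := by rw [← h1]
          _ = a^(p-1) * (t/a)^(p-1) := Real.mul_rpow ha.le (by positivity)
          _ = A * a * (t/a)^(p-1) := by rw [h2]
      have hA0 : 0 < A := Real.rpow_pos_of_pos ha _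
      have hkey : A * t + (p-2)*A*(t-a) ≤ t ^ (p-1) := by
        rw [htp]
        have := mul_le_mul_of_nonneg_left hber (by positivity : (0:ℝ) ≤ A * a)
        calc A * t + (p-2)*A*(t-a) = A * a * (1 + (p-1)*(t/a - 1)) := by
              field_simp; ring
          _ ≤ A * a * (t/a)^(p-1) := this
      nlinarith [hkey, hp]
  have hfab := mono (Set.self_mem_Ici) (Set.mem_Ici.mpr hab) hab
  have ha2 : A * a^2 = a^p := by
    rw [hA, ← Real.rpow_natCast a 2, ← Real.rpow_add ha]; norm_num
  have hsq : (a-b)^2 = (b-a)^2 := by ring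
  simp only [hf] at hfab
  nlinarith [hfab, ha2]


lemma lemB {p a b : ℝ} (hp : 2 < p) (hb : 0 < b) (hba : b ≤ a) :
    p/2*(p-2)*(b^(p-1)/a)*(a-b)^2 ≤ b^p - a^p - p/2*a^(p-2)*(b^2-a^2) := by
  set g : ℝ → ℝ := fun t => b^p - t^p - p/2*(t^(p-2)*(b^2-t^2)) - p/2*(p-2)*b^(p-1)*((t-b)^2/t)
    with hg
  have key : ∀ t ∈ Set.Ici b, HasDerivAt g
      (p/2*(p-2)*((t^2-b^2)*(t^(p-1) - b^(p-1)))/t^2) t := by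
    intro t ht
    have ht0 : 0 < t := lt_of_lt_of_le hb ht
    have h1 : HasDerivAt (fun t : ℝ => b^p - t^p) (-(p * t ^ (p-1))) t := by
      simpa using (Real.hasDerivAt_rpow_const (p := p) (Or.inl ht0.ne')).const_sub (b^p)
    have h2 : HasDerivAt (fun t : ℝ => t ^ (p-2)) ((p-2) * t ^ (p-3)) t := by
      have := Real.hasDerivAt_rpow_const (p := p-2) (Or.inl ht0.ne')
      convert this using 2; ring
    have h3 : HasDerivAt (fun t : ℝ => b^2 - t^2) (-(2*t)) t := by
      simpa using (hasDerivAt_pow 2 t).const_sub (b^2)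
    have h23 := (h2.mul h3).const_mul (p/2)
    have h4 : HasDerivAt (fun t : ℝ => (t-b)^2/t) ((2*(t-b)*t - (t-b)^2*1)/t^2) t := by
      have hnum : HasDerivAt (fun t : ℝ => (t-b)^2) (2*(t-b)) t := by
        simpa [Pi.pow_def] using ((hasDerivAt_id t).sub_const b).pow 2
      simpa [Pi.div_def] using hnum.div (hasDerivAt_id t) ht0.ne'
    have h4' := h4.const_mul (p/2*(p-2)*b^(p-1))
    have hcomb := (h1.sub h23).sub h4'
    refine hcomb.congr_deriv ?_
    have E1 : t ^ (p-2) = t^(p-1)/t := by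
      rw [show p-2 = (p-1)-1 by ring, Real.rpow_sub ht0, Real.rpow_one]
    have E2 : t ^ (p-3) = t^(p-1)/t^2 := by
      rw [show p-3 = (p-1)-2 by ring, Real.rpow_sub ht0,
        show ((2:ℝ)) = ((2:ℕ):ℝ) by norm_num, Real.rpow_natCast]
    rw [E1, E2]
    field_simp
    ring
  have mono : MonotoneOn g (Set.Ici b) := by
    apply monotoneOn_of_deriv_nonneg (convex_Ici b)
    · exact fun t ht => (key t ht).continuousAt.continuousWithinAt
    · rw [interior_Ici]
      exact fun t ht => ((key t (Set.mem_Ici.mpr (le_of_lt ht))).differentiableAt).differentiableWithinAt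
    · rw [interior_Ici]
      intro t ht
      rw [(key t (Set.mem_Ici.mpr (le_of_lt ht))).deriv]
      have ht0 : 0 < t := lt_trans hb ht
      have h1 : 0 ≤ t^2 - b^2 := by nlinarith [(Set.mem_Ioi.mp ht).le]
      have h2 : 0 ≤ t^(p-1) - b^(p-1) := by
        have := Real.rpow_le_rpow hb.le (Set.mem_Ioi.mp ht).le (by linarith : (0:ℝ) ≤ p-1)
        linarith
      have h3 : 0 ≤ p/2*(p-2)*((t^2-b^2)*(t^(p-1) - b^(p-1))) :=
        mul_nonneg (mul_nonneg (by linarith) (by linarith)) (mul_nonneg h1 h2)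
      exact div_nonneg h3 (sq_nonneg t)
  have hgb : g b = 0 := by
    simp only [hg]
    field_simp
    ring
  have hfab := mono Set.self_mem_Ici (Set.mem_Ici.mpr hba) hba
  rw [hgb] at hfab
  simp only [hg] at hfab
  have : p/2*(p-2)*(b^(p-1)/a)*(a-b)^2 = p/2*(p-2)*b^(p-1)*((a-b)^2/a) := by ring
  linarith


lemma two_rpow_gt {p : ℝ} (hp : 2 < p) : p < 2 ^ (p-1) := by
  have h1 : (2:ℝ)^(p-1) = 2^(p-2) * 2 := by
    rw [show p-1 = p-2+1 by ring, Real.rpow_add_one (by norm_num : (2:ℝ) ≠ 0) (p-2)]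
  have h2 : (2:ℝ)^(p-2) = Real.exp (Real.log 2 * (p-2)) := Real.rpow_def_of_pos (by norm_num) _
  have h3 : Real.log 2 * (p-2) + 1 ≤ Real.exp (Real.log 2 * (p-2)) :=
    Real.add_one_le_exp _
  have hl2 : (0.6931471803:ℝ) < Real.log 2 := Real.log_two_gt_d9
  nlinarith

lemma delta_pos {p : ℝ} (hp : 2 < p) : 0 < 1 - p * 2^((1:ℝ)-p) := by
  have h1 : (2:ℝ)^((1:ℝ)-p) = ((2:ℝ)^(p-1))⁻¹ := by
    rw [show (1:ℝ)-p = -(p-1) by ring, Real.rpow_neg (by norm_num)]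
  have h2 : (0:ℝ) < 2^(p-1) := Real.rpow_pos_of_pos (by norm_num) _
  have h3 := two_rpow_gt hp
  rw [h1]
  rw [sub_pos, ← div_eq_mul_inv, div_lt_one h2]
  exact h3
lemma scalar_main {p κ : ℝ} (hp : 2 < p) (hκ0 : 0 < κ) (hκ1 : κ < 1) :
    ∃ C : ℝ, 0 < C ∧ ∀ a b s W : ℝ, 0 < a → 0 ≤ b → 0 ≤ s → s ≤ a + b →
      W = (if a < b then a^(p-2) else b^(p-1)/a) →
      b ^ p ≥ a ^ p + p * a ^ (p-2) * ((b^2 - a^2 - s^2)/2)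
        + (1 - κ) / 2 * (p * a ^ (p-2) * s^2 + p * (p-2) * W * (a-b)^2)
        + C * s^p := by
  set C := min (κ*(p/2)*3^((2:ℝ)-p)) (κ*(1 - p*2^((1:ℝ)-p))*(2/3)^p) with hCdef
  have hδ := delta_pos hp
  have hCpos : 0 < C := by
    apply lt_min
    · have : (0:ℝ) < 3^((2:ℝ)-p) := Real.rpow_pos_of_pos (by norm_num) _
      positivity
    · have : (0:ℝ) < ((2:ℝ)/3)^p := Real.rpow_pos_of_pos (by norm_num) _
      positivity
  refine ⟨C, hCpos, ?_⟩
  intro a b s W ha hb hs hsab hW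
  have hA0 : (0:ℝ) < a^(p-2) := Real.rpow_pos_of_pos ha _
  have hWnn : 0 ≤ W := by
    rw [hW]; split_ifs
    · exact hA0.le
    · exact div_nonneg (Real.rpow_nonneg hb _) ha.le
  have hWtnn : 0 ≤ p/2*(p-2)*W*(a-b)^2 := by
    have h1 : (0:ℝ) ≤ p/2*(p-2) := by nlinarith
    have := mul_nonneg (mul_nonneg h1 hWnn) (sq_nonneg (a-b))
    linarith [this]
  -- core: φ ≥ Wt
  have hφ : p/2*(p-2)*W*(a-b)^2 ≤ b^p - a^p - p/2*a^(p-2)*(b^2-a^2) := by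
    rw [hW]; split_ifs with h
    · exact lemA hp ha h.le
    · push_neg at h
      rcases eq_or_lt_of_le hb with heq | hb0
      · rw [← heq]
        have z1 : (0:ℝ)^(p-1) = 0 := Real.zero_rpow (by intro hc; rw [sub_eq_zero] at hc; linarith)
        have z2 : (0:ℝ)^p = 0 := Real.zero_rpow (by positivity)
        have z3 : a^(p-2)*a^2 = a^p := by
          rw [← Real.rpow_natCast a 2, ← Real.rpow_add ha]; norm_num
        rw [z1, z2, zero_div]
        have hap : 0 < a^p := Real.rpow_pos_of_pos ha _
        have f5 : 2*a^p ≤ p*a^p := mul_le_mul_of_nonneg_right (by linarith) hap.le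
        have f2' : p/2*(a^(p-2)*a^2) = p/2*a^p := by rw [z3]
        nlinarith [f5, f2', hap]
      · exact lemB hp hb0 h
  -- suffices a rearranged version
  rw [ge_iff_le]
  have main : C * s^p ≤ (b^p - a^p - p/2*a^(p-2)*(b^2-a^2))
      - (1-κ)*(p/2*(p-2)*W*(a-b)^2) + κ*(p/2)*a^(p-2)*s^2 := by
    have hslack : 0 ≤ (b^p - a^p - p/2*a^(p-2)*(b^2-a^2)) - (1-κ)*(p/2*(p-2)*W*(a-b)^2) := by
      have := mul_nonneg hκ0.le hWtnn
      nlinarith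
    by_cases hcase : s ≤ 3*a
    · -- case 1
      have h1 : C * s^p ≤ κ*(p/2)*a^(p-2)*s^2 := by
        rcases eq_or_lt_of_le hs with h0 | hs0
        · rw [← h0, Real.zero_rpow (by positivity : p ≠ 0)]
          have : (0:ℝ) ≤ κ*(p/2)*a^(p-2)*0^2 := by positivity
          linarith [this]
        · have e1 : (s/3)^(p-2) ≤ a^(p-2) :=
            Real.rpow_le_rpow (by positivity) (by linarith) (by linarith)
          have e2 : (s/3)^(p-2)*s^2 = 3^((2:ℝ)-p)*s^p := by
            have es : s^(p-2)*s^2 = s^p := by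
              rw [← Real.rpow_natCast s 2, ← Real.rpow_add hs0]; norm_num
            have h3 : (3:ℝ)^((2:ℝ)-p) = ((3:ℝ)^(p-2))⁻¹ := by
              rw [show (2:ℝ)-p = -(p-2) by ring, Real.rpow_neg (by norm_num)]
            have h30 : (0:ℝ) < (3:ℝ)^(p-2) := Real.rpow_pos_of_pos (by norm_num) _
            rw [Real.div_rpow hs0.le (by norm_num), h3]
            field_simp
            linarith [es]
          have e3 : C ≤ κ*(p/2)*3^((2:ℝ)-p) := min_le_left _ _
          have hsp : (0:ℝ) ≤ s^p := Real.rpow_nonneg hs _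
          calc C * s^p ≤ κ*(p/2)*3^((2:ℝ)-p) * s^p := mul_le_mul_of_nonneg_right e3 hsp
            _ = κ*(p/2)*((s/3)^(p-2)*s^2) := by rw [e2]; ring
            _ ≤ κ*(p/2)*(a^(p-2)*s^2) := by
                have := mul_le_mul_of_nonneg_right e1 (sq_nonneg s)
                have hk : (0:ℝ) ≤ κ*(p/2) := by positivity
                nlinarith
            _ = κ*(p/2)*a^(p-2)*s^2 := by ring
      linarith [h1, hslack]
    · -- case 2
      push_neg at hcase
      have hs0 : 0 < s := by linarith
      have hab : 2*a < b := by linarith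
      have hbb : 2/3*s < b := by linarith
      have hb0 : 0 < b := by linarith
      set φ := b^p - a^p - p/2*a^(p-2)*(b^2-a^2) with hφdef
      have hφδ : (1 - p*2^((1:ℝ)-p))*b^p ≤ φ := by
        have k1 : a^(p-2) ≤ (b/2)^(p-2) :=
          Real.rpow_le_rpow ha.le (by linarith) (by linarith)
        have k2 : (b/2)^(p-2)*b^2 = 2^((2:ℝ)-p)*b^p := by
          have eb : b^(p-2)*b^2 = b^p := by
            rw [← Real.rpow_natCast b 2, ← Real.rpow_add hb0]; norm_num
          have h3 : (2:ℝ)^((2:ℝ)-p) = ((2:ℝ)^(p-2))⁻¹ := by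
            rw [show (2:ℝ)-p = -(p-2) by ring, Real.rpow_neg (by norm_num)]
          have h20 : (0:ℝ) < (2:ℝ)^(p-2) := Real.rpow_pos_of_pos (by norm_num) _
          rw [Real.div_rpow hb0.le (by norm_num), h3]
          field_simp
          linarith [eb]
        have k3 : a^(p-2)*a^2 = a^p := by
          rw [← Real.rpow_natCast a 2, ← Real.rpow_add ha]; norm_num
        have k4 : (2:ℝ)^((2:ℝ)-p) = 2^((1:ℝ)-p)*2 := by
          rw [show (2:ℝ)-p = (1-p)+1 by ring, Real.rpow_add_one (by norm_num : (2:ℝ) ≠ 0)]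
        have hap : 0 < a^p := Real.rpow_pos_of_pos ha _
        have m1 : a^(p-2)*b^2 ≤ (b/2)^(p-2)*b^2 :=
          mul_le_mul_of_nonneg_right k1 (sq_nonneg b)
        have : p/2*(a^(p-2)*b^2) ≤ p/2*((b/2)^(p-2)*b^2) := by
          apply mul_le_mul_of_nonneg_left m1 (by linarith)
        rw [k2, k4] at this
        have f2' : p/2*(a^(p-2)*a^2) = p/2*a^p := by rw [k3]
        have f5 : 2*a^p ≤ p*a^p := mul_le_mul_of_nonneg_right (by linarith) hap.le
        have f4 : p/2*(2^((1:ℝ)-p)*2*b^p) = p*(2^((1:ℝ)-p))*b^p := by ring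
        simp only [hφdef]
        nlinarith [this, f2', f5, f4]
      have hbp : ((2:ℝ)/3)^p * s^p ≤ b^p := by
        have h1 : (2/3*s)^p ≤ b^p := Real.rpow_le_rpow (by positivity) hbb.le (by linarith)
        have h2 : ((2:ℝ)/3*s)^p = (2/3)^p * s^p := Real.mul_rpow (by norm_num) hs0.le
        linarith [h1, h2.symm.le, h2.le]
      have e3 : C ≤ κ*(1 - p*2^((1:ℝ)-p))*(2/3)^p := min_le_right _ _
      have hsp : (0:ℝ) ≤ s^p := Real.rpow_nonneg hs _
      have step1 : C * s^p ≤ κ*(1 - p*2^((1:ℝ)-p))*((2/3)^p * s^p) := by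
        have := mul_le_mul_of_nonneg_right e3 hsp
        linarith [this]
      have step2 : κ*(1 - p*2^((1:ℝ)-p))*((2/3)^p * s^p) ≤ κ*(1 - p*2^((1:ℝ)-p))*b^p := by
        apply mul_le_mul_of_nonneg_left hbp (by positivity)
      have step3 : κ*(1 - p*2^((1:ℝ)-p))*b^p ≤ κ*φ := by
        calc κ*(1 - p*2^((1:ℝ)-p))*b^p = κ*((1 - p*2^((1:ℝ)-p))*b^p) := by ring
          _ ≤ κ*φ := mul_le_mul_of_nonneg_left hφδ hκ0.le
      have step4 : κ*φ ≤ φ - (1-κ)*(p/2*(p-2)*W*(a-b)^2) := by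
        have h1 : 0 ≤ (1-κ)*(φ - p/2*(p-2)*W*(a-b)^2) :=
          mul_nonneg (by linarith) (by linarith [hφ])
        nlinarith [h1]
      have h5 : (0:ℝ) ≤ κ*(p/2)*a^(p-2)*s^2 := by positivity
      have chain := le_trans (le_trans (le_trans step1 step2) step3) step4
      linarith only [chain, h5]
  linarith [main]

theorem vector_expansion_p_ge_two (N : ℕ) (hN : 1 ≤ N) (p κ : ℝ)
    (hp : 2 ≤ p) (hκ0 : 0 < κ) (hκ1 : κ < 1) :
    ∃ C₁ : ℝ, 0 < C₁ ∧ ∀ x y : EuclideanSpace ℝ (Fin N), x ≠ 0 →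
      let w : EuclideanSpace ℝ (Fin N) :=
        if ‖x‖ < ‖x + y‖ then x
        else ((‖x + y‖ / ‖x‖) ^ ((1 : ℝ) / (p - 2))) • (x + y)
      ‖x + y‖ ^ p ≥ ‖x‖ ^ p + p * ‖x‖ ^ (p - 2) * ⟪x, y⟫
        + (1 - κ) / 2 * (p * ‖x‖ ^ (p - 2) * ‖y‖ ^ 2
            + p * (p - 2) * ‖w‖ ^ (p - 2) * (‖x‖ - ‖x + y‖) ^ 2)
        + C₁ * ‖y‖ ^ p := by
  rcases eq_or_lt_of_le hp with hpe | hp2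
  · -- p = 2
    refine ⟨κ, hκ0, ?_⟩
    intro x y hx w
    have h22 : p - 2 = 0 := by rw [← hpe]; ring
    have hinner := norm_add_sq_real x y
    have hp2' : ‖x + y‖ ^ p = ‖x + y‖ ^ (2:ℕ) := by
      rw [← hpe, show ((2:ℝ)) = ((2:ℕ):ℝ) by norm_num, Real.rpow_natCast]
    have hpx : ‖x‖ ^ p = ‖x‖ ^ (2:ℕ) := by
      rw [← hpe, show ((2:ℝ)) = ((2:ℕ):ℝ) by norm_num, Real.rpow_natCast]
    have hpy : ‖y‖ ^ p = ‖y‖ ^ (2:ℕ) := by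
      rw [← hpe, show ((2:ℝ)) = ((2:ℕ):ℝ) by norm_num, Real.rpow_natCast]
    rw [h22, hp2', hpx, hpy, Real.rpow_zero, Real.rpow_zero, ← hpe]
    rw [ge_iff_le]
    linarith [hinner]
  · -- p > 2
    obtain ⟨C, hC, hmain⟩ := scalar_main hp2 hκ0 hκ1
    refine ⟨C, hC, ?_⟩
    intro x y hx w
    have hw : w = if ‖x‖ < ‖x + y‖ then x
        else ((‖x + y‖ / ‖x‖) ^ ((1 : ℝ) / (p - 2))) • (x + y) := rfl
    have ha : 0 < ‖x‖ := norm_pos_iff.mpr hx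
    have hb : (0:ℝ) ≤ ‖x + y‖ := norm_nonneg _
    have hs : (0:ℝ) ≤ ‖y‖ := norm_nonneg _
    have hsab : ‖y‖ ≤ ‖x‖ + ‖x + y‖ := by
      have : y = (x + y) - x := by abel
      calc ‖y‖ = ‖(x + y) - x‖ := by rw [← this]
        _ ≤ ‖x + y‖ + ‖x‖ := norm_sub_le _ _
        _ = ‖x‖ + ‖x + y‖ := by ring
    have hinner : ⟪x, y⟫ = (‖x + y‖^2 - ‖x‖^2 - ‖y‖^2)/2 := by
      have := norm_add_sq_real x y; linarith
    have hWval : ‖w‖ ^ (p-2)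
        = (if ‖x‖ < ‖x + y‖ then ‖x‖^(p-2) else ‖x + y‖^(p-1)/‖x‖) := by
      rw [hw]
      split_ifs with h
      · rfl
      · have hc0 : (0:ℝ) ≤ (‖x + y‖ / ‖x‖) ^ ((1 : ℝ) / (p - 2)) :=
          Real.rpow_nonneg (by positivity) _
        have e1 : ((‖x + y‖ / ‖x‖) ^ ((1:ℝ)/(p-2))) ^ (p-2) = ‖x + y‖ / ‖x‖ := by
          rw [← Real.rpow_mul (by positivity : (0:ℝ) ≤ ‖x + y‖ / ‖x‖),
            show (1:ℝ)/(p-2)*(p-2) = 1 from one_div_mul_cancel (by linarith), Real.rpow_one]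
        have e2 : ‖x + y‖ / ‖x‖ * ‖x + y‖ ^ (p-2) = ‖x + y‖ ^ (p-1) / ‖x‖ := by
          rw [div_mul_eq_mul_div]
          congr 1
          rw [show ‖x + y‖ * ‖x + y‖ ^ (p-2) = ‖x + y‖ ^ (1:ℝ) * ‖x + y‖ ^ (p-2) by
            rw [Real.rpow_one]]
          rw [← Real.rpow_add' (norm_nonneg _) (by intro hc; nlinarith : (1:ℝ) + (p-2) ≠ 0),
            show (1:ℝ)+(p-2) = p-1 by ring]
        rw [norm_smul, Real.norm_eq_abs, abs_of_nonneg hc0,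
          Real.mul_rpow hc0 (norm_nonneg _), e1, e2]
    rw [hinner, hWval]
    split_ifs with hlt
    · exact hmain ‖x‖ ‖x + y‖ ‖y‖ (‖x‖^(p-2)) ha hb hs hsab (if_pos hlt).symm
    · exact hmain ‖x‖ ‖x + y‖ ‖y‖ (‖x + y‖^(p-1)/‖x‖) ha hb hs hsab (if_neg hlt).symm
end

section
/- Let $1<p<2$, $\kappa\in(0,1)$. There exists $C_1=C_1(p,\kappa)>0$ such that for all $x,y\in\mathbb{R}^N$ with $x\ne0$: $|x+y|^p\ge |x|^p+p|x|^{p-2}x\cdot y+\tfrac{1-\kappa}{2}\big(p|x|^{p-2}|y|^2+p(p-2)|\tilde\omega|^{p-2}(|x|-|x+y|)^2\big)+C_1\min\{|y|^p,|x|^{p-2}|y|^2\}$, where $\tilde\omega=\tilde\omega(x,x+y)$ equals $\big(\frac{|x+y|}{(2-p)|x+y|+(p-1)|x|}\big)^{1/(p-2)}x$ if $|x|<|x+y|$ and $x$ otherwise. -/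
open Real
open scoped RealInnerProductSpace


lemma bern_s11 {q x : ℝ} (hq0 : 0 ≤ q) (hq1 : q ≤ 1) (hx : 0 ≤ x) :
    x ^ q ≤ 1 + q * (x - 1) := by
  have h := Real.geom_mean_le_arith_mean2_weighted hq0 (by linarith : (0:ℝ) ≤ 1 - q)
    hx (by norm_num : (0:ℝ) ≤ 1) (by ring)
  rw [Real.one_rpow, mul_one] at h
  linarith

lemma L1n {p : ℝ} (hp1 : 1 < p) (hp2 : p < 2) {τ : ℝ} (h0 : 0 ≤ τ) (h1 : τ ≤ 1) :
    1 + p * (τ - 1) + p * (p - 1) / 2 * (τ - 1) ^ 2 ≤ τ ^ p := by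
  rcases eq_or_lt_of_le h0 with h | h
  · rw [← h, Real.zero_rpow (by positivity)]
    nlinarith [mul_nonneg (sub_nonneg.mpr hp1.le) (sub_nonneg.mpr hp2.le)]
  rcases eq_or_lt_of_le h1 with h1' | h1'
  · rw [h1', Real.one_rpow]; norm_num
  set F : ℝ → ℝ := fun r => r ^ p - p * r - p * (p - 1) / 2 * (r - 1) ^ 2 with hF
  have hder : ∀ r : ℝ, 0 < r → HasDerivAt F (p * r ^ (p-1) - p - p * (p-1) / 2 * (2 * (r-1))) r := by
    intro r hr
    have h1 : HasDerivAt (fun r : ℝ => r ^ p) (p * r ^ (p-1)) r :=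
      Real.hasDerivAt_rpow_const (Or.inl hr.ne')
    have h2 : HasDerivAt (fun r : ℝ => p * r) p r := (hasDerivAt_id r).const_mul p |>.congr_deriv (by ring)
    have h3 : HasDerivAt (fun r : ℝ => p * (p-1)/2 * (r-1)^2) (p * (p-1)/2 * (2*(r-1))) r := by
      have := ((hasDerivAt_id r).sub_const 1).pow 2
      simpa using this.const_mul (p * (p-1)/2)
    exact (h1.sub h2).sub h3
  have hanti : AntitoneOn F (Set.Icc τ 1) := by
    apply antitoneOn_of_deriv_nonpos (convex_Icc τ 1)
    · exact fun r hr => ((hder r (lt_of_lt_of_le h hr.1)).continuousAt).continuousWithinAt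
    · intro r hr
      rw [interior_Icc] at hr
      exact (hder r (h.trans hr.1)).differentiableAt.differentiableWithinAt
    · intro r hr
      rw [interior_Icc] at hr
      rw [(hder r (h.trans hr.1)).deriv]
      have hb := bern_s11 (by linarith : (0:ℝ) ≤ p - 1) (by linarith) (le_of_lt (h.trans hr.1))
      nlinarith [hb]
  have hmem1 : (1:ℝ) ∈ Set.Icc τ 1 := by constructor <;> linarith
  have hmemτ : τ ∈ Set.Icc τ 1 := by constructor <;> linarith
  have := hanti hmemτ hmem1 h1
  rw [hF] at this
  simp only [Real.one_rpow] at this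
  linarith

lemma L2n {p : ℝ} (hp1 : 1 < p) (hp2 : p < 2) {τ : ℝ} (h1 : 1 ≤ τ) :
    1 + p * (τ - 1) + p * (p - 1) / 2 * (τ ^ (p-2) * (τ - 1) ^ 2) ≤ τ ^ p := by
  rcases eq_or_lt_of_le h1 with h1' | h1'
  · rw [← h1', Real.one_rpow]; norm_num
  set F : ℝ → ℝ := fun r => r ^ p - p * r - p * (p - 1) / 2 * (r ^ (p-2) * (r - 1) ^ 2) with hF
  have hder : ∀ r : ℝ, 0 < r → HasDerivAt F
      (p * r ^ (p-1) - p - p * (p-1)/2 * ((p-2) * r ^ (p-3) * (r-1)^2 + r ^ (p-2) * (2*(r-1)))) r := by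
    intro r hr
    have h1 : HasDerivAt (fun r : ℝ => r ^ p) (p * r ^ (p-1)) r :=
      Real.hasDerivAt_rpow_const (Or.inl hr.ne')
    have h2 : HasDerivAt (fun r : ℝ => p * r) p r := by
      simpa using (hasDerivAt_id r).const_mul p
    have h3a : HasDerivAt (fun r : ℝ => r ^ (p-2)) ((p-2) * r ^ (p-3)) r := by
      have := Real.hasDerivAt_rpow_const (p := p-2) (Or.inl hr.ne')
      convert this using 2; ring
    have h3b : HasDerivAt (fun r : ℝ => (r-1)^2) (2*(r-1)) r := by
      have := ((hasDerivAt_id r).sub_const 1).pow 2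
      simp at this
      exact this
    have h3 := (h3a.mul h3b).const_mul (p * (p-1)/2)
    have := (h1.sub h2).sub h3
    exact this
  have hmono : MonotoneOn F (Set.Icc 1 τ) := by
    apply monotoneOn_of_deriv_nonneg (convex_Icc 1 τ)
    · exact fun r hr => ((hder r (lt_of_lt_of_le one_pos hr.1)).continuousAt).continuousWithinAt
    · intro r hr
      rw [interior_Icc] at hr
      exact (hder r (lt_trans one_pos hr.1)).differentiableAt.differentiableWithinAt
    · intro r hr
      rw [interior_Icc] at hr
      have hr1 : 1 < r := hr.1
      have hr0 : 0 < r := lt_trans one_pos hr1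
      rw [(hder r hr0).deriv]
      -- key facts
      have hb := bern_s11 (by linarith : (0:ℝ) ≤ p - 1) (by linarith) (le_of_lt (one_div_pos.mpr hr0))
      have e1 : r ^ (p-1) * (1/r) ^ (p-1) = 1 := by
        rw [← Real.mul_rpow hr0.le (by positivity), mul_one_div, div_self hr0.ne', Real.one_rpow]
      have e2 : r ^ (p-1) * (1/r) = r ^ (p-2) := by
        rw [one_div, ← Real.rpow_neg_one r, ← Real.rpow_add hr0]; congr 1; ring
      have e3 : r ^ (p-2) * r = r ^ (p-1) := by
        nth_rewrite 2 [← Real.rpow_one r]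
        rw [← Real.rpow_add hr0]; congr 1; ring
      have e4 : r ^ (p-3) * r = r ^ (p-2) := by
        nth_rewrite 2 [← Real.rpow_one r]
        rw [← Real.rpow_add hr0]; congr 1; ring
      -- bracket : 1 ≤ r^(p-1) - (p-1)*(r^(p-1) - r^(p-2))
      have hbr : 1 ≤ r ^ (p-1) - (p-1) * (r ^ (p-1) - r ^ (p-2)) := by
        have := mul_le_mul_of_nonneg_left hb (Real.rpow_nonneg hr0.le (p-1))
        rw [e1] at this
        nlinarith [e2, this]
      have hpos : 0 ≤ p * (p-1) * (2-p)/2 * (r ^ (p-3) * (r-1)^2) := by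
        have h1 : (0:ℝ) < p * (p-1) * (2-p) :=
          mul_pos (mul_pos (by linarith) (by linarith)) (by linarith)
        apply mul_nonneg (by linarith) (mul_nonneg (Real.rpow_nonneg hr0.le _) (sq_nonneg _))
      have hbrp := mul_le_mul_of_nonneg_left hbr (by positivity : (0:ℝ) ≤ p)
      have e3p : p * (p-1) * (r ^ (p-2) * r) = p * (p-1) * r ^ (p-1) := by rw [e3]
      nlinarith [hbrp, hpos, e3p]
  have hmem1 : (1:ℝ) ∈ Set.Icc 1 τ := by constructor <;> linarith
  have hmemτ : τ ∈ Set.Icc 1 τ := by constructor <;> linarith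
  have := hmono hmem1 hmemτ h1
  rw [hF] at this
  simp only [Real.one_rpow] at this
  linarith


lemma scalar_key (p κ : ℝ) (hp1 : 1 < p) (hp2 : p < 2) (hκ0 : 0 < κ) (hκ1 : κ < 1) :
    ∃ C₁ : ℝ, 0 < C₁ ∧ ∀ τ υ : ℝ, 0 ≤ τ → |τ - 1| ≤ υ → υ ≤ τ + 1 →
      1 + p * ((τ^2 - 1 - υ^2)/2)
        + (1 - κ)/2 * (p * υ^2 + p*(p-2) * (if 1 < τ then τ/((2-p)*τ+(p-1)) else 1) * (1-τ)^2)
        + C₁ * min (υ^p) (υ^2) ≤ τ ^ p := by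
  have hp0 : 0 < p := by linarith
  have hp1' : 0 < p - 1 := by linarith
  have h2p : 0 < 2 - p := by linarith
  have hκ1' : 0 < 1 - κ := by linarith
  have hpp : 0 < p*(p-1) := mul_pos hp0 hp1'
  have hκp : 0 < κ*p := mul_pos hκ0 hp0
  set T : ℝ := max 2 ((8/(2-p)) ^ ((1:ℝ)/(p-1))) with hT
  have hT2 : (2:ℝ) ≤ T := le_max_left _ _
  have hT0 : 0 < T := by linarith
  have hTp3 : 0 < T ^ (p-3) := Real.rpow_pos_of_pos hT0 _
  have hv1 : 0 < κ*p*(p-1)/2 := by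
    have := mul_pos hκp hp1'; linarith only [this]
  have hv2 : 0 < p*(p-1)*κ/2 * T^(p-3) := by
    have := mul_pos (mul_pos hpp hκ0) hTp3; linarith only [this]
  have hv3 : 0 < p*(p-1)/64 := by linarith only [hpp]
  refine ⟨min (κ*p*(p-1)/2) (min (p*(p-1)*κ/2 * T^(p-3)) (p*(p-1)/64)), by
    simp only [lt_min_iff]; exact ⟨hv1, hv2, hv3⟩, ?_⟩
  set C₁ : ℝ := min (κ*p*(p-1)/2) (min (p*(p-1)*κ/2 * T^(p-3)) (p*(p-1)/64)) with hC₁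
  have hC1a : C₁ ≤ κ*p*(p-1)/2 := min_le_left _ _
  have hC1b : C₁ ≤ p*(p-1)*κ/2 * T^(p-3) := le_trans (min_le_right _ _) (min_le_left _ _)
  have hC1c : C₁ ≤ p*(p-1)/64 := le_trans (min_le_right _ _) (min_le_right _ _)
  have hC1pos : 0 < C₁ := by simp only [hC₁, lt_min_iff]; exact ⟨hv1, hv2, hv3⟩
  have hC1half : C₁ ≤ κ*p/2 := by
    have h := mul_nonneg hκp.le h2p.le
    linarith only [hC1a, h]
  intro τ υ h0 h2 h3
  have hυ0 : 0 ≤ υ := le_trans (abs_nonneg _) h2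
  have hυsq : (τ-1)^2 ≤ υ^2 := by
    rw [← sq_abs (τ-1)]; exact pow_le_pow_left₀ (abs_nonneg _) h2 2
  have hmp : min (υ^p) (υ^2) ≤ υ^p := min_le_left _ _
  have hC1m2 : C₁ * min (υ^p) (υ^2) ≤ C₁ * υ^2 :=
    mul_le_mul_of_nonneg_left (min_le_right _ _) hC1pos.le
  by_cases hτ1 : τ ≤ 1
  · -- Case 1 : τ ≤ 1
    rw [if_neg (by linarith)]
    have hD := L1n hp1 hp2 h0 hτ1
    have t2 : (κ*p*(2-p)/2) * (τ-1)^2 ≤ (κ*p*(2-p)/2) * υ^2 :=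
      mul_le_mul_of_nonneg_left hυsq (by have := mul_pos hκp h2p; linarith only [this])
    have t3 : 0 ≤ (κ*p*(p-1)/2 - C₁) * υ^2 := mul_nonneg (by linarith) (sq_nonneg υ)
    linarith only [hD, hC1m2, t2, t3]
  push_neg at hτ1
  have hτpos : 0 < τ := by linarith
  rw [if_pos hτ1]
  have hD := L2n hp1 hp2 hτ1.le
  set E : ℝ := (2-p)*τ + (p-1) with hE
  have hEpos : 0 < E := by
    have := mul_pos h2p hτpos; linarith only [this, hp1', hE]
  have hEτ : E ≤ τ := by
    have := mul_nonneg hp1'.le (by linarith only [hτ1] : (0:ℝ) ≤ τ - 1)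
    linarith only [this, hE]
  have hq0 : 0 < τ ^ (p-2) := Real.rpow_pos_of_pos hτpos _
  have hqE : 1 ≤ τ ^ (p-2) * E := by
    have hAM : τ ^ (2-p) ≤ E := by
      have h := Real.geom_mean_le_arith_mean2_weighted h2p.le hp1'.le hτpos.le
        (by norm_num : (0:ℝ) ≤ 1) (by ring)
      rw [Real.one_rpow, mul_one, mul_one] at h
      linarith only [h, hE]
    have hqr : τ ^ (p-2) * τ ^ (2-p) = 1 := by
      rw [← Real.rpow_add hτpos]; norm_num
    calc (1:ℝ) = τ ^ (p-2) * τ ^ (2-p) := hqr.symm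
    _ ≤ τ ^ (p-2) * E := mul_le_mul_of_nonneg_left hAM hq0.le
  by_cases hτT : τ ≤ T
  · -- Case 2 : 1 < τ ≤ T
    have hTp2 : T ^ (p-2) ≤ 1 :=
      Real.rpow_le_one_of_one_le_of_nonpos (by linarith) (by linarith)
    have hTp3T : T ^ (p-3) * T = T ^ (p-2) := by
      nth_rewrite 2 [← Real.rpow_one T]
      rw [← Real.rpow_add hT0]; congr 1; ring
    have hK : 0 ≤ p*(p-1)/2 * (τ ^ (p-2) * E) - (1-κ)*(p*(p-1)/2) - C₁*E := by
      have t6 : 0 ≤ p*(p-1)/2 * (τ ^ (p-2) * E - 1) :=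
        mul_nonneg (by linarith only [hpp]) (by linarith only [hqE])
      have u1 : C₁*E ≤ (p*(p-1)*κ/2 * T^(p-3))*E := mul_le_mul_of_nonneg_right hC1b hEpos.le
      have u2 : (p*(p-1)*κ/2)*(T^(p-3)*E) ≤ (p*(p-1)*κ/2)*(T^(p-3)*T) :=
        mul_le_mul_of_nonneg_left
          (mul_le_mul_of_nonneg_left (hEτ.trans hτT) hTp3.le)
          (by have := mul_pos hpp hκ0; linarith only [this])
      have u3 : (p*(p-1)*κ/2)*(T^(p-2)) ≤ (p*(p-1)*κ/2)*1 :=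
        mul_le_mul_of_nonneg_left hTp2 (by have := mul_pos hpp hκ0; linarith only [this])
      rw [hTp3T] at u2
      linarith only [t6, u1, u2, u3]
    have hdiv : 0 ≤ p*(p-1)/2 * τ^(p-2) + (1-κ)*p*(2-p)/2*(τ/E) - p/2 + κ*p/2 - C₁ := by
      have hrw : p*(p-1)/2 * τ^(p-2) + (1-κ)*p*(2-p)/2*(τ/E) - p/2 + κ*p/2 - C₁
          = (p*(p-1)/2 * (τ ^ (p-2) * E) - (1-κ)*(p*(p-1)/2) - C₁*E)/E := by
        field_simp
        ring
      rw [hrw]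
      exact div_nonneg hK hEpos.le
    have t4 : 0 ≤ (p*(p-1)/2 * τ^(p-2) + (1-κ)*p*(2-p)/2*(τ/E) - p/2 + κ*p/2 - C₁) * (τ-1)^2 :=
      mul_nonneg hdiv (sq_nonneg _)
    have t5 : 0 ≤ (κ*p/2 - C₁) * (υ^2 - (τ-1)^2) :=
      mul_nonneg (by linarith only [hC1half]) (by linarith only [hυsq])
    linarith only [hD, t4, t5, hC1m2]
  · -- Case 3 : T < τ
    push_neg at hτT
    have hτ2 : 2 ≤ τ := le_trans hT2 hτT.le
    have h2pτ : 0 < (2-p)*τ := mul_pos h2p hτpos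
    have hqτ2 : τ^(p-2) * τ^2 = τ^p := by
      rw [← Real.rpow_natCast τ 2, ← Real.rpow_add hτpos]; norm_num
    have hWlow : (1-κ)*p/2 - p*(p-1)/2 * (1/((2-p)*τ)) ≤ (1-κ)*p*(2-p)/2*(τ/E) := by
      have idW : (1-κ)*p*(2-p)/2*(τ/E) = (1-κ)*p/2 - (1-κ)*(p*(p-1)/2)*(1/E) := by
        field_simp
        ring
      have hinv : 1/E ≤ 1/((2-p)*τ) :=
        one_div_le_one_div_of_le h2pτ (by linarith only [hp1', hE] : (2-p)*τ ≤ E)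
      have hbnd : (1-κ)*(p*(p-1)/2)*(1/E) ≤ p*(p-1)/2*(1/((2-p)*τ)) := by
        apply mul_le_mul
          (by have := mul_nonneg hκ0.le hpp.le; linarith only [this]) hinv
          (le_of_lt (one_div_pos.mpr hEpos)) (by linarith only [hpp])
      linarith only [idW, hbnd]
    have hsq2 : (τ/2)^2 ≤ (τ-1)^2 := pow_le_pow_left₀ (by linarith) (by linarith) 2
    have b1 : τ^p ≤ 4*(τ^(p-2)*(τ-1)^2) := by
      have := mul_le_mul_of_nonneg_left hsq2 hq0.le
      linarith only [this, hqτ2]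
    have hZ : (τ-1)^2 * (1/((2-p)*τ)) ≤ τ^p/8 := by
      have hsq3 : (τ-1)^2 ≤ τ^2 := by linarith only [hτ2, sq_nonneg τ, sq_nonneg (τ-1), hτpos]
      have s1 : (τ-1)^2 * (1/((2-p)*τ)) ≤ τ^2 * (1/((2-p)*τ)) :=
        mul_le_mul_of_nonneg_right hsq3 (le_of_lt (one_div_pos.mpr h2pτ))
      have s2 : τ^2 * (1/((2-p)*τ)) = τ/(2-p) := by field_simp
      rw [s2] at s1
      have hTcond : 8/(2-p) ≤ τ^(p-1) := by
        have hb8 : (0:ℝ) ≤ 8/(2-p) := div_nonneg (by norm_num) h2p.le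
        have ha : (8/(2-p)) ^ ((1:ℝ)/(p-1)) ≤ τ := le_trans (le_max_right _ _) hτT.le
        have hc := Real.rpow_le_rpow (Real.rpow_nonneg hb8 _) ha (by linarith : (0:ℝ) ≤ p-1)
        rwa [← Real.rpow_mul hb8, one_div, inv_mul_cancel₀ (by linarith : p-(1:ℝ) ≠ 0),
          Real.rpow_one] at hc
      have hτp1τ : τ^(p-1) * τ = τ^p := by
        nth_rewrite 2 [← Real.rpow_one τ]
        rw [← Real.rpow_add hτpos]; congr 1; ring
      have s3 : 8/(2-p) * τ ≤ τ^p := by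
        have := mul_le_mul_of_nonneg_right hTcond hτpos.le
        rwa [hτp1τ] at this
      have s4 : τ/(2-p) ≤ τ^p/8 := by
        rw [div_le_div_iff₀ h2p (by norm_num)]
        calc τ * 8 = (8/(2-p) * τ) * (2-p) := by field_simp
        _ ≤ τ^p * (2-p) := mul_le_mul_of_nonneg_right s3 h2p.le
      linarith only [s1, s4]
    have m1 : υ^p ≤ (τ+1)^p := Real.rpow_le_rpow hυ0 h3 hp0.le
    have m2 : (τ+1)^p ≤ (2*τ)^p := Real.rpow_le_rpow (by linarith) (by linarith) hp0.le
    have m3 : ((2:ℝ)*τ)^p = 2^p * τ^p := Real.mul_rpow (by norm_num) hτpos.le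
    have m4 : (2:ℝ)^p ≤ 4 := by
      have h := Real.rpow_le_rpow_of_exponent_le (by norm_num : (1:ℝ) ≤ 2) hp2.le
      rwa [show ((2:ℝ)^(2:ℝ) = 4) by
        rw [show ((2:ℝ) = ((2:ℕ):ℝ)) by norm_num]; rw [Real.rpow_natCast]; norm_num] at h
    have m5 : (2:ℝ)^p * τ^p ≤ 4 * τ^p :=
      mul_le_mul_of_nonneg_right m4 (Real.rpow_nonneg hτpos.le p)
    have hmin4 : C₁ * min (υ^p) (υ^2) ≤ C₁ * (4*τ^p) := by
      apply mul_le_mul_of_nonneg_left _ hC1pos.le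
      calc min (υ^p) (υ^2) ≤ υ^p := hmp
      _ ≤ (τ+1)^p := m1
      _ ≤ (2*τ)^p := m2
      _ = 2^p * τ^p := m3
      _ ≤ 4*τ^p := m5
    have b5 : (κ*p/2)*(τ-1)^2 ≤ (κ*p/2)*υ^2 :=
      mul_le_mul_of_nonneg_left hυsq (by linarith only [hκp])
    have d1 : 0 ≤ (p*(p-1)/64 - C₁) * τ^p :=
      mul_nonneg (by linarith only [hC1c]) (Real.rpow_nonneg hτpos.le p)
    have w1 := mul_le_mul_of_nonneg_right hWlow (sq_nonneg (τ-1))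
    have z1 : (p*(p-1)/2) * ((τ-1)^2 * (1/((2-p)*τ))) ≤ (p*(p-1)/2) * (τ^p/8) :=
      mul_le_mul_of_nonneg_left hZ (by linarith only [hpp])
    have z2 : (p*(p-1)/8) * τ^p ≤ (p*(p-1)/8) * (4*(τ^(p-2)*(τ-1)^2)) :=
      mul_le_mul_of_nonneg_left b1 (by linarith only [hpp])
    linarith only [hD, w1, b5, z1, hmin4, d1, z2]


theorem vector_expansion_p_lt_two (N : ℕ) (hN : 1 ≤ N) (p κ : ℝ)
    (hp1 : 1 < p) (hp2 : p < 2) (hκ0 : 0 < κ) (hκ1 : κ < 1) :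
    ∃ C₁ : ℝ, 0 < C₁ ∧ ∀ x y : EuclideanSpace ℝ (Fin N), x ≠ 0 →
      let w : EuclideanSpace ℝ (Fin N) :=
        if ‖x‖ < ‖x + y‖ then
          ((‖x + y‖ / ((2 - p) * ‖x + y‖ + (p - 1) * ‖x‖)) ^ ((1 : ℝ) / (p - 2))) • x
        else x
      ‖x + y‖ ^ p ≥ ‖x‖ ^ p + p * ‖x‖ ^ (p - 2) * ⟪x, y⟫
        + (1 - κ) / 2 * (p * ‖x‖ ^ (p - 2) * ‖y‖ ^ 2
            + p * (p - 2) * ‖w‖ ^ (p - 2) * (‖x‖ - ‖x + y‖) ^ 2)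
        + C₁ * min (‖y‖ ^ p) (‖x‖ ^ (p - 2) * ‖y‖ ^ 2) := by
  obtain ⟨C₁, hC1pos, hkey⟩ := scalar_key p κ hp1 hp2 hκ0 hκ1
  refine ⟨C₁, hC1pos, ?_⟩
  intro x y hx
  simp only [ge_iff_le]
  have hs : 0 < ‖x‖ := norm_pos_iff.mpr hx
  set s := ‖x‖ with hsdef
  set t := ‖x + y‖ with htdef
  set u := ‖y‖ with hudef
  have ht0 : 0 ≤ t := norm_nonneg _
  have hu0 : 0 ≤ u := norm_nonneg _
  have hp1' : 0 < p - 1 := by linarith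
  have h2p : 0 < 2 - p := by linarith
  have hip : ⟪x, y⟫ = (t^2 - s^2 - u^2)/2 := by
    have h := norm_add_sq_real x y
    rw [← htdef, ← hsdef, ← hudef] at h
    linarith
  have habs : |t - s| ≤ u := by
    have h := abs_norm_sub_norm_le (x + y) x
    rwa [add_sub_cancel_left] at h
  have hus : u ≤ t + s := by
    have h := norm_sub_le (x + y) x
    rwa [add_sub_cancel_left] at h
  have h0 : 0 ≤ t/s := div_nonneg ht0 hs.le
  have h2 : |t/s - 1| ≤ u/s := by
    rw [show t/s - 1 = (t-s)/s by field_simp, abs_div, abs_of_pos hs]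
    gcongr
  have h3 : u/s ≤ t/s + 1 := by
    have h : u/s ≤ (t+s)/s := by gcongr
    rwa [add_div, div_self hs.ne'] at h
  have H := hkey (t/s) (u/s) h0 h2 h3
  have hsp : 0 < s^p := Real.rpow_pos_of_pos hs p
  have H2 := mul_le_mul_of_nonneg_left H hsp.le
  have e1 : s^p * (t/s)^p = t^p := by
    rw [Real.div_rpow ht0 hs.le]; field_simp
  rw [e1] at H2
  refine le_trans (le_of_eq ?_) H2
  have hkey2 : s^(p-2) * s^2 = s^p := by
    rw [← Real.rpow_natCast s 2, ← Real.rpow_add hs]; norm_num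
  have eup : u^p = s^p * (u/s)^p := by
    rw [Real.div_rpow hu0 hs.le]; field_simp
  have eu2 : s^(p-2) * u^2 = s^p * (u/s)^2 := by
    rw [← hkey2]; field_simp
  have emin : min (u^p) (s^(p-2)*u^2) = s^p * min ((u/s)^p) ((u/s)^2) := by
    rcases le_total ((u/s)^p) ((u/s)^2) with hm|hm
    · rw [min_eq_left hm, min_eq_left (by rw [eup, eu2]; exact mul_le_mul_of_nonneg_left hm hsp.le)]
      exact eup
    · rw [min_eq_right hm, min_eq_right (by rw [eup, eu2]; exact mul_le_mul_of_nonneg_left hm hsp.le)]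
      exact eu2
  rw [hip, emin]
  by_cases hlt : s < t
  · have hτif : (1:ℝ) < t/s := (one_lt_div hs).mpr hlt
    rw [if_pos hlt, if_pos hτif]
    have hden : 0 < (2-p)*t + (p-1)*s := by
      have h1 := mul_nonneg h2p.le ht0
      have h2 := mul_pos hp1' hs
      linarith
    have hrat0 : 0 ≤ t/((2-p)*t+(p-1)*s) := div_nonneg ht0 hden.le
    have hwn : ‖((t / ((2 - p) * t + (p - 1) * s)) ^ ((1:ℝ)/(p-2))) • x‖ ^ (p-2)
        = (t/((2-p)*t+(p-1)*s)) * s^(p-2) := by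
      rw [norm_smul, Real.norm_eq_abs, abs_of_nonneg (Real.rpow_nonneg hrat0 _),
        Real.mul_rpow (Real.rpow_nonneg hrat0 _) hs.le, ← Real.rpow_mul hrat0]
      rw [one_div, inv_mul_cancel₀ (by linarith : p - (2:ℝ) ≠ 0)]
      norm_num
    rw [hwn]
    have hden2 : (2-p)*(t/s)+(p-1) ≠ 0 := by
      have : (2-p)*(t/s)+(p-1) = ((2-p)*t+(p-1)*s)/s := by field_simp
      rw [this]
      exact ne_of_gt (div_pos hden hs)
    simp only [← hkey2]
    field_simp
  · push_neg at hlt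
    have hτif : ¬ ((1:ℝ) < t/s) := by
      rw [not_lt]
      exact (div_le_one hs).mpr hlt
    rw [if_neg (not_lt.mpr hlt), if_neg hτif]
    simp only [← hkey2]
    field_simp
    ring
end

section
/- Let $K>p>1$. The function $\eta_0(\tau)=\frac{(p-1)-\tau^{p/(p-1)}}{(1+\tau^{p/(p-1)})^{K/p}}$ satisfies, for all $\tau>0$, the ODE $\eta_0''+\Big(\frac{K-1}{p-1}+\frac{(p-2)K}{(p-1)(1+\tau^{p/(p-1)})}\Big)\frac{\eta_0'}{\tau}+\frac{K(Kp-K+p)}{(p-1)^2}\frac{\tau^{p/(p-1)-2}}{(1+\tau^{p/(p-1)})^2}\eta_0=0$. -/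
open Real

theorem eta0_solves_ode (p K : ℝ) (hp : 1 < p) (hK : p < K) :
    ∀ τ : ℝ, 0 < τ →
      let η₀ : ℝ → ℝ := fun t => ((p - 1) - t ^ (p / (p - 1))) /
        ((1 + t ^ (p / (p - 1))) ^ (K / p))
      deriv (deriv η₀) τ
        + ((K - 1) / (p - 1) + (p - 2) * K / ((p - 1) * (1 + τ ^ (p / (p - 1)))))
          * (deriv η₀ τ / τ)
        + K * (K * p - K + p) / (p - 1) ^ 2
          * (τ ^ (p / (p - 1) - 2) / (1 + τ ^ (p / (p - 1))) ^ 2) * η₀ τ = 0 := by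
  intro τ hτ
  dsimp only
  set A : ℝ := p / (p - 1) with hA
  set b : ℝ := K / p with hb
  have hp1 : (0:ℝ) < p - 1 := by linarith
  have hp0 : (0:ℝ) < p := by linarith
  -- positivity facts at a general point
  have hpos : ∀ t : ℝ, 0 < t → (0:ℝ) < 1 + t ^ A := fun t ht => by
    have := Real.rpow_pos_of_pos ht A; linarith
  -- first derivative
  set F : ℝ → ℝ := fun t => -A * t ^ (A - 1) *
      ((1 + t ^ A) + b * ((p - 1) - t ^ A)) / (1 + t ^ A) ^ (b + 1) with hF
  have key1 : ∀ t : ℝ, 0 < t →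
      HasDerivAt (fun t => ((p - 1) - t ^ A) / ((1 + t ^ A) ^ b)) (F t) t := by
    intro t ht
    have hs : (0:ℝ) < 1 + t ^ A := hpos t ht
    have hinner : HasDerivAt (fun u : ℝ => 1 + u ^ A) (A * t ^ (A - 1)) t :=
      (Real.hasDerivAt_rpow_const (Or.inl ht.ne')).const_add 1
    have hg : HasDerivAt (fun u : ℝ => (p - 1) - u ^ A) (-(A * t ^ (A - 1))) t :=
      (Real.hasDerivAt_rpow_const (Or.inl ht.ne')).const_sub (p - 1)
    have houter : HasDerivAt (fun x : ℝ => x ^ b) (b * (1 + t ^ A) ^ (b - 1)) (1 + t ^ A) :=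
      Real.hasDerivAt_rpow_const (Or.inl hs.ne')
    have hh : HasDerivAt (fun u : ℝ => (1 + u ^ A) ^ b)
        (b * (1 + t ^ A) ^ (b - 1) * (A * t ^ (A - 1))) t := by have := houter.comp t hinner; exact this
    have hne : (1 + t ^ A) ^ b ≠ 0 := (Real.rpow_pos_of_pos hs b).ne'
    have := hg.div hh hne
    refine this.congr_deriv ?_
    symm
    have e5 : (1 + t ^ A) ^ (b - 1) = (1 + t ^ A) ^ b / (1 + t ^ A) := by
      rw [Real.rpow_sub hs, Real.rpow_one]
    have e6 : (1 + t ^ A) ^ (b + 1) = (1 + t ^ A) ^ b * (1 + t ^ A) := by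
      rw [Real.rpow_add hs, Real.rpow_one]
    rw [hF]
    beta_reduce
    rw [e5, e6]
    field_simp
    ring
  -- second derivative of η₀ equals derivative of F
  have hs : (0:ℝ) < 1 + τ ^ A := hpos τ hτ
  have hsne : (1 + τ ^ A) ≠ 0 := hs.ne'
  have hzpos : (0:ℝ) < (1 + τ ^ A) ^ b := Real.rpow_pos_of_pos hs b
  -- HasDerivAt for F at τ
  have hinner : HasDerivAt (fun u : ℝ => 1 + u ^ A) (A * τ ^ (A - 1)) τ :=
    (Real.hasDerivAt_rpow_const (Or.inl hτ.ne')).const_add 1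
  have hg : HasDerivAt (fun u : ℝ => (p - 1) - u ^ A) (-(A * τ ^ (A - 1))) τ :=
    (Real.hasDerivAt_rpow_const (Or.inl hτ.ne')).const_sub (p - 1)
  have hP : HasDerivAt (fun t : ℝ => -A * t ^ (A - 1)) (-A * ((A - 1) * τ ^ (A - 1 - 1))) τ :=
    (Real.hasDerivAt_rpow_const (Or.inl hτ.ne')).const_mul (-A)
  have hM : HasDerivAt (fun t : ℝ => (1 + t ^ A) + b * ((p - 1) - t ^ A))
      (A * τ ^ (A - 1) + b * -(A * τ ^ (A - 1))) τ :=
    hinner.add (hg.const_mul b)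
  have hu : HasDerivAt (fun t : ℝ => -A * t ^ (A - 1) * ((1 + t ^ A) + b * ((p - 1) - t ^ A)))
      (-A * ((A - 1) * τ ^ (A - 1 - 1)) * ((1 + τ ^ A) + b * ((p - 1) - τ ^ A))
       + (-A * τ ^ (A - 1)) * (A * τ ^ (A - 1) + b * -(A * τ ^ (A - 1)))) τ := hP.mul hM
  have houterD : HasDerivAt (fun x : ℝ => x ^ (b + 1))
      ((b + 1) * (1 + τ ^ A) ^ (b + 1 - 1)) (1 + τ ^ A) :=
    Real.hasDerivAt_rpow_const (Or.inl hs.ne')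
  have hD : HasDerivAt (fun t : ℝ => (1 + t ^ A) ^ (b + 1))
      ((b + 1) * (1 + τ ^ A) ^ (b + 1 - 1) * (A * τ ^ (A - 1))) τ := by have := houterD.comp τ hinner; exact this
  have hDne : (1 + τ ^ A) ^ (b + 1) ≠ 0 := (Real.rpow_pos_of_pos hs (b + 1)).ne'
  have hF' : HasDerivAt F
      (((-A * ((A - 1) * τ ^ (A - 1 - 1)) * ((1 + τ ^ A) + b * ((p - 1) - τ ^ A))
        + (-A * τ ^ (A - 1)) * (A * τ ^ (A - 1) + b * -(A * τ ^ (A - 1))))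
        * (1 + τ ^ A) ^ (b + 1)
        - (-A * τ ^ (A - 1) * ((1 + τ ^ A) + b * ((p - 1) - τ ^ A)))
          * ((b + 1) * (1 + τ ^ A) ^ (b + 1 - 1) * (A * τ ^ (A - 1))))
        / ((1 + τ ^ A) ^ (b + 1)) ^ 2) τ := hu.div hD hDne
  -- deriv η₀ agrees with F near τ
  have hev : deriv (fun t : ℝ => ((p - 1) - t ^ A) / ((1 + t ^ A) ^ b)) =ᶠ[nhds τ] F := by
    filter_upwards [isOpen_Ioi.eventually_mem (Set.mem_Ioi.mpr hτ)] with t ht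
    exact (key1 t ht).deriv
  rw [hev.deriv_eq, hF'.deriv, (key1 τ hτ).deriv]
  -- now pure algebra with rpow identities
  have e4 : b + 1 - 1 = b := by ring
  rw [e4]
  have e5 : (1 + τ ^ A) ^ (b + 1) = (1 + τ ^ A) ^ b * (1 + τ ^ A) := by
    rw [Real.rpow_add hs, Real.rpow_one]
  rw [hF]
  beta_reduce
  rw [e5]
  have e2 : τ ^ (A - 1 - 1) = τ ^ (A - 1) / τ := by
    rw [Real.rpow_sub hτ, Real.rpow_one]
  have e3 : τ ^ (A - 2) = τ ^ (A - 1) / τ := by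
    rw [show A - 2 = A - 1 - 1 by ring, e2]
  rw [e2, e3]
  have e1 : τ ^ A = τ ^ (A - 1) * τ := by
    nth_rewrite 1 [show A = A - 1 + 1 by ring]
    rw [Real.rpow_add hτ, Real.rpow_one]
  set x : ℝ := τ ^ (A - 1) with hx
  have hxpos : 0 < x := Real.rpow_pos_of_pos hτ _
  rw [e1] at hs hsne ⊢
  set z : ℝ := (1 + x * τ) ^ b with hz
  have hzne : z ≠ 0 := (Real.rpow_pos_of_pos hs b).ne'
  rw [hA, hb]
  field_simp
  ring
end

section
/- Let $N\ge 2$, $1<p<p+\mu<N$, $p-s+\mu>0$, $r=\frac{p(N-s)}{N-p-\mu}$, and $U(x)=C_{N,p,\mu,s}(1+|x|^{\frac{p-s+\mu}{p-1}})^{-\frac{N-p-\mu}{p-s+\mu}}$ with $C_{N,p,\mu,s}=\big[(N-s)\big(\frac{N-p-\mu}{p-1}\big)^{p-1}\big]^{\frac{N-p-\mu}{p(p-s+\mu)}}$. Then $U$ is a classical positive solution on $\mathbb{R}^N\setminus\{0\}$ of the weighted $p$-Laplace equation $-\mathrm{div}(|x|^{-\mu}|\nabla U|^{p-2}\nabla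 U)=|x|^{-s}U^{r-1}$. -/
open Real InnerProductSpace

local notation "⟪" x ", " y "⟫" => @inner ℝ _ _ x y

private lemma sq_rpow (x c : ℝ) (hx : 0 ≤ x) : ((x ^ 2 : ℝ)) ^ c = x ^ (2 * c) := by
  rw [← Real.rpow_natCast x 2, ← Real.rpow_mul hx]
  norm_num

private lemma radial_hasFDerivAt {E : Type*} [NormedAddCommGroup E] [InnerProductSpace ℝ E]
    [CompleteSpace E] (F : ℝ → ℝ) (F' : ℝ) (x : E)
    (hF : HasDerivAt F F' (‖x‖ ^ 2)) :
    HasFDerivAt (fun y : E => F (‖y‖ ^ 2)) ((2 * F') • (toDual ℝ E x : E →L[ℝ] ℝ)) x := by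
  have h0 : HasFDerivAt (fun y : E => ⟪y, y⟫)
      ((fderivInnerCLM ℝ (x, x)).comp
        ((ContinuousLinearMap.id ℝ E).prod (ContinuousLinearMap.id ℝ E))) x :=
    (hasFDerivAt_id x).inner ℝ (hasFDerivAt_id x)
  have h1 : HasDerivAt F F' (⟪x, x⟫) := by rwa [real_inner_self_eq_norm_sq]
  have h2 := HasDerivAt.comp_hasFDerivAt (f := fun y : E => ⟪y, y⟫) x h1 h0
  have hfun : (fun y : E => F (‖y‖ ^ 2)) = F ∘ (fun y : E => ⟪y, y⟫) := by
    funext y; simp [real_inner_self_eq_norm_sq]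
  rw [hfun]
  refine h2.congr_fderiv ?_
  ext h
  simp [fderivInnerCLM_apply, real_inner_comm, InnerProductSpace.toDual_apply_apply,
    real_inner_smul_left]
  ring

private lemma radial_hasGradientAt {E : Type*} [NormedAddCommGroup E] [InnerProductSpace ℝ E]
    [CompleteSpace E] (F : ℝ → ℝ) (F' : ℝ) (x : E)
    (hF : HasDerivAt F F' (‖x‖ ^ 2)) :
    HasGradientAt (fun y : E => F (‖y‖ ^ 2)) ((2 * F') • x) x := by
  rw [hasGradientAt_iff_hasFDerivAt]
  refine (radial_hasFDerivAt F F' x hF).congr_fderiv ?_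
  ext h
  simp [InnerProductSpace.toDual_apply_apply, real_inner_smul_left]

private lemma div_sum_computation {n : ℕ} (G Gd : ℝ) (x : EuclideanSpace ℝ (Fin n)) :
    ∑ i : Fin n, ((G • ContinuousLinearMap.id ℝ (EuclideanSpace ℝ (Fin n))
        + ((2 * Gd) • (toDual ℝ (EuclideanSpace ℝ (Fin n)) x : EuclideanSpace ℝ (Fin n) →L[ℝ] ℝ)).smulRight x)
      (EuclideanSpace.single i 1)) i = n * G + 2 * Gd * ‖x‖ ^ 2 := by
  have hns : (‖x‖:ℝ) ^ 2 = ∑ i, x i * x i := by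
    rw [← real_inner_self_eq_norm_sq]
    simp only [PiLp.inner_apply, RCLike.inner_apply, conj_trivial, mul_comm]
  simp only [ContinuousLinearMap.add_apply, ContinuousLinearMap.smul_apply,
    ContinuousLinearMap.id_apply, ContinuousLinearMap.smulRight_apply,
    InnerProductSpace.toDual_apply_apply, PiLp.add_apply, PiLp.smul_apply, smul_eq_mul]
  rw [Finset.sum_add_distrib, hns, Finset.mul_sum]
  congr 1
  · simp [EuclideanSpace.single_apply, mul_comm]
  · refine Finset.sum_congr rfl fun i _ => ?_
    have : ⟪x, EuclideanSpace.single i (1:ℝ)⟫ = x i := by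
      simp [EuclideanSpace.inner_single_right]
    rw [this]; ring

theorem ckn_extremal_solves (N : ℕ) (p μ s : ℝ)
    (hN : 2 ≤ N) (hp : 1 < p) (hμ : 0 < μ) (hpμN : p + μ < (N : ℝ))
    (hpsμ : 0 < p - s + μ) :
    let r : ℝ := p * ((N : ℝ) - s) / ((N : ℝ) - p - μ)
    let C : ℝ := (((N : ℝ) - s) * (((N : ℝ) - p - μ) / (p - 1)) ^ (p - 1))
      ^ (((N : ℝ) - p - μ) / (p * (p - s + μ)))
    let U : EuclideanSpace ℝ (Fin N) → ℝ := fun x =>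
      C * (1 + ‖x‖ ^ ((p - s + μ) / (p - 1))) ^ (-(((N : ℝ) - p - μ) / (p - s + μ)))
    let V : EuclideanSpace ℝ (Fin N) → EuclideanSpace ℝ (Fin N) := fun x =>
      (‖x‖ ^ (-μ) * ‖gradient U x‖ ^ (p - 2)) • gradient U x
    ∀ x : EuclideanSpace ℝ (Fin N), x ≠ 0 →
      0 < U x ∧ DifferentiableAt ℝ V x ∧
      -(∑ i : Fin N, (fderiv ℝ V x (EuclideanSpace.single i 1)) i)
        = ‖x‖ ^ (-s) * (U x) ^ (r - 1) := by
  intro r C U V x hx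
  have hNR : (2:ℝ) ≤ (N:ℝ) := by exact_mod_cast hN
  have hP1 : (0:ℝ) < p - 1 := by linarith
  have hA : (0:ℝ) < (N:ℝ) - p - μ := by linarith
  have hNs : (0:ℝ) < (N:ℝ) - s := by linarith
  have hp0 : (0:ℝ) < p := by linarith
  have hD3 : μ + (p - s) ≠ 0 := by intro h; exact hpsμ.ne' (by linarith)
  have hA3 : ↑N - (p + μ) ≠ (0:ℝ) := by intro h; exact hA.ne' (by linarith)
  have hr : r = p * ((N:ℝ) - s) / ((N:ℝ) - p - μ) := rfl
  have hCd : C = (((N:ℝ) - s) * (((N:ℝ) - p - μ) / (p - 1)) ^ (p - 1))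
      ^ (((N:ℝ) - p - μ) / (p * (p - s + μ))) := rfl
  have hBpos : (0:ℝ) < ((N:ℝ) - s) * (((N:ℝ) - p - μ) / (p - 1)) ^ (p - 1) :=
    mul_pos hNs (Real.rpow_pos_of_pos (div_pos hA hP1) _)
  have hC : (0:ℝ) < C := by rw [hCd]; exact Real.rpow_pos_of_pos hBpos _
  set a : ℝ := (p - s + μ) / (p - 1) with ha1
  set b : ℝ := ((N:ℝ) - p - μ) / (p - s + μ) with hb1
  have ha : (0:ℝ) < a := div_pos hpsμ hP1
  have hb : (0:ℝ) < b := div_pos hA hpsμ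
  have hab : a * b = ((N:ℝ) - p - μ) / (p - 1) := by
    rw [ha1, hb1, div_mul_div_comm, mul_comm (p - 1) (p - s + μ)]
    exact mul_div_mul_left _ _ hpsμ.ne'
  have hap : a * (p - 1) = p - s + μ := by
    rw [ha1]; exact div_mul_cancel₀ _ hP1.ne'
  have hbD : b * (p - s + μ) = (N:ℝ) - p - μ := by
    rw [hb1]; exact div_mul_cancel₀ _ hpsμ.ne'
  have hrA : (p * ((N:ℝ) - s) / ((N:ℝ) - p - μ)) * ((N:ℝ) - p - μ) = p * ((N:ℝ) - s) :=
    div_mul_cancel₀ _ hA.ne'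
  set e : ℝ := (-b - 1) * (p - 1) with he1
  set K : ℝ := C ^ (p - 1) * (((N:ℝ) - p - μ) / (p - 1)) ^ (p - 1) with hK1
  have ht : (0:ℝ) < ‖x‖ := norm_pos_iff.mpr hx
  have hUy : ∀ y : EuclideanSpace ℝ (Fin N), U y = C * (1 + ‖y‖ ^ a) ^ (-b) := fun y => rfl
  have hVy : ∀ y : EuclideanSpace ℝ (Fin N),
      V y = (‖y‖ ^ (-μ) * ‖gradient U y‖ ^ (p - 2)) • gradient U y := fun y => rfl
  have hUpos : 0 < U x := by
    rw [hUy x]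
    exact mul_pos hC (Real.rpow_pos_of_pos (by positivity) _)
  -- gradient formula
  have hgrad : ∀ y : EuclideanSpace ℝ (Fin N), y ≠ 0 →
      gradient U y = (-(C * (a * b)) * (‖y‖ ^ (a - 2) * (1 + ‖y‖ ^ a) ^ (-b - 1))) • y := by
    intro y hy
    have hty : (0:ℝ) < ‖y‖ := norm_pos_iff.mpr hy
    have hu : (0:ℝ) < ‖y‖ ^ 2 := by positivity
    have hQ : (0:ℝ) < 1 + ((‖y‖ ^ 2 : ℝ)) ^ (a/2) := by positivity
    have h1 : HasDerivAt (fun v : ℝ => v ^ (a/2))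
        (a/2 * ((‖y‖ ^ 2 : ℝ)) ^ (a/2 - 1)) (‖y‖ ^ 2) :=
      Real.hasDerivAt_rpow_const (Or.inl hu.ne')
    have h2 : HasDerivAt (fun v : ℝ => 1 + v ^ (a/2))
        (a/2 * ((‖y‖ ^ 2 : ℝ)) ^ (a/2 - 1)) (‖y‖ ^ 2) := h1.const_add 1
    have h3 := h2.rpow_const (p := -b) (Or.inl hQ.ne')
    have h4 := h3.const_mul C
    have h5 := radial_hasGradientAt _ _ y h4
    have h6 : HasGradientAt U
        ((2 * (C * (a/2 * ((‖y‖ ^ 2 : ℝ)) ^ (a/2 - 1) * -b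
          * (1 + ((‖y‖ ^ 2 : ℝ)) ^ (a/2)) ^ (-b - 1)))) • y) y := by
      refine h5.congr_of_eventuallyEq (Filter.Eventually.of_forall fun z => ?_)
      show U z = C * ((1 + ((‖z‖ ^ 2 : ℝ)) ^ (a/2)) ^ (-b))
      rw [hUy z, sq_rpow ‖z‖ (a/2) (norm_nonneg z), show (2:ℝ) * (a/2) = a by ring]
    rw [h6.gradient]
    congr 1
    rw [sq_rpow ‖y‖ (a/2) (norm_nonneg y), sq_rpow ‖y‖ (a/2 - 1) (norm_nonneg y),
      show (2:ℝ) * (a/2) = a by ring, show (2:ℝ) * (a/2 - 1) = a - 2 by ring]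
    ring
  -- V formula
  have hVform : ∀ y : EuclideanSpace ℝ (Fin N), y ≠ 0 →
      V y = (-K * ‖y‖ ^ (-s) * (1 + ‖y‖ ^ a) ^ e) • y := by
    intro y hy
    have hty : (0:ℝ) < ‖y‖ := norm_pos_iff.mpr hy
    have hQp : (0:ℝ) < 1 + ‖y‖ ^ a := by positivity
    have hQ1 : (0:ℝ) ≤ (1 + ‖y‖ ^ a) ^ (-b - 1) := Real.rpow_nonneg hQp.le _
    have hMneg : -(C * (a * b)) * (‖y‖ ^ (a - 2) * (1 + ‖y‖ ^ a) ^ (-b - 1)) ≤ 0 := by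
      have h1 : (0:ℝ) ≤ (C * (a * b)) * (‖y‖ ^ (a - 2) * (1 + ‖y‖ ^ a) ^ (-b - 1)) := by
        have := Real.rpow_nonneg (norm_nonneg y) (a - 2)
        positivity
      linarith
    rw [hVy y, hgrad y hy, norm_smul, Real.norm_eq_abs, abs_of_nonpos hMneg, smul_smul]
    congr 1
    rw [show -(-(C * (a * b)) * (‖y‖ ^ (a - 2) * (1 + ‖y‖ ^ a) ^ (-b - 1)))
        = (C * (a * b)) * (‖y‖ ^ (a - 2) * (1 + ‖y‖ ^ a) ^ (-b - 1)) by ring]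
    have hstep : (C * (a * b)) * (‖y‖ ^ (a - 2) * (1 + ‖y‖ ^ a) ^ (-b - 1)) * ‖y‖
        = (C * (a * b)) * (‖y‖ ^ (a - 1) * (1 + ‖y‖ ^ a) ^ (-b - 1)) := by
      have h := Real.rpow_add hty (a - 2) 1
      rw [Real.rpow_one] at h
      rw [show a - 1 = a - 2 + 1 by ring, h]; ring
    rw [hstep]
    rw [Real.mul_rpow (by positivity)
        (by positivity : (0:ℝ) ≤ ‖y‖ ^ (a - 1) * (1 + ‖y‖ ^ a) ^ (-b - 1)),
      Real.mul_rpow (Real.rpow_nonneg (norm_nonneg y) _) hQ1,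
      ← Real.rpow_mul (norm_nonneg y), ← Real.rpow_mul hQp.le]
    have cT : ‖y‖ ^ (-μ) * ‖y‖ ^ ((a - 1) * (p - 2)) * ‖y‖ ^ (a - 2) = ‖y‖ ^ (-s) := by
      rw [← Real.rpow_add hty, ← Real.rpow_add hty]
      congr 1
      linear_combination hap
    have cQ : (1 + ‖y‖ ^ a) ^ ((-b - 1) * (p - 2)) * (1 + ‖y‖ ^ a) ^ (-b - 1)
        = (1 + ‖y‖ ^ a) ^ e := by
      rw [← Real.rpow_add hQp]
      congr 1
      rw [he1]; ring
    have cK : (C * (a * b)) ^ (p - 2) * (C * (a * b)) = K := by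
      have h := Real.rpow_add (mul_pos hC (mul_pos ha hb)) (p - 2) 1
      rw [Real.rpow_one] at h
      rw [show (C * (a * b)) ^ (p - 2) * (C * (a * b)) = (C * (a * b)) ^ (p - 2 + 1) from h.symm,
        show p - 2 + 1 = p - 1 by ring, hab,
        Real.mul_rpow hC.le (div_pos hA hP1).le, hK1]
    linear_combination
      (-(((C * (a * b)) ^ (p - 2) * (C * (a * b)))
          * ((1 + ‖y‖ ^ a) ^ ((-b - 1) * (p - 2)) * (1 + ‖y‖ ^ a) ^ (-b - 1)))) * cT
      + (-(((C * (a * b)) ^ (p - 2) * (C * (a * b))) * ‖y‖ ^ (-s))) * cQ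
      + (-(‖y‖ ^ (-s) * (1 + ‖y‖ ^ a) ^ e)) * cK
  -- derivative data at x
  have hu : (0:ℝ) < ‖x‖ ^ 2 := by positivity
  have hQu : (0:ℝ) < 1 + ((‖x‖ ^ 2 : ℝ)) ^ (a/2) := by positivity
  have hg1 : HasDerivAt (fun v : ℝ => v ^ (-(s/2)))
      (-(s/2) * ((‖x‖ ^ 2 : ℝ)) ^ (-(s/2) - 1)) (‖x‖ ^ 2) :=
    Real.hasDerivAt_rpow_const (Or.inl hu.ne')
  have hg2 := hg1.const_mul (-K)
  have hq1 : HasDerivAt (fun v : ℝ => v ^ (a/2))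
      (a/2 * ((‖x‖ ^ 2 : ℝ)) ^ (a/2 - 1)) (‖x‖ ^ 2) :=
    Real.hasDerivAt_rpow_const (Or.inl hu.ne')
  have hq2 : HasDerivAt (fun v : ℝ => 1 + v ^ (a/2))
      (a/2 * ((‖x‖ ^ 2 : ℝ)) ^ (a/2 - 1)) (‖x‖ ^ 2) := hq1.const_add 1
  have hg3 := hq2.rpow_const (p := e) (Or.inl hQu.ne')
  have hg4 := hg2.mul hg3
  have hDc : HasFDerivAt
      (fun y : EuclideanSpace ℝ (Fin N) => -K * ((‖y‖ ^ 2 : ℝ)) ^ (-(s/2)) * (1 + ((‖y‖ ^ 2 : ℝ)) ^ (a/2)) ^ e)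
      ((2 * ((-K * (-(s/2) * ((‖x‖ ^ 2 : ℝ)) ^ (-(s/2) - 1))) * ((1 + ((‖x‖ ^ 2 : ℝ)) ^ (a/2)) ^ e)
        + (-K * ((‖x‖ ^ 2 : ℝ)) ^ (-(s/2)))
          * (a/2 * ((‖x‖ ^ 2 : ℝ)) ^ (a/2 - 1) * e * (1 + ((‖x‖ ^ 2 : ℝ)) ^ (a/2)) ^ (e - 1))))
        • (toDual ℝ (EuclideanSpace ℝ (Fin N)) x : EuclideanSpace ℝ (Fin N) →L[ℝ] ℝ)) x :=
    radial_hasFDerivAt _ _ x hg4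
  have hVt : HasFDerivAt
      (fun y : EuclideanSpace ℝ (Fin N) => (-K * ((‖y‖ ^ 2 : ℝ)) ^ (-(s/2)) * (1 + ((‖y‖ ^ 2 : ℝ)) ^ (a/2)) ^ e) • y)
      ((-K * ((‖x‖ ^ 2 : ℝ)) ^ (-(s/2)) * (1 + ((‖x‖ ^ 2 : ℝ)) ^ (a/2)) ^ e)
          • ContinuousLinearMap.id ℝ (EuclideanSpace ℝ (Fin N))
        + ((2 * ((-K * (-(s/2) * ((‖x‖ ^ 2 : ℝ)) ^ (-(s/2) - 1))) * ((1 + ((‖x‖ ^ 2 : ℝ)) ^ (a/2)) ^ e)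
          + (-K * ((‖x‖ ^ 2 : ℝ)) ^ (-(s/2)))
            * (a/2 * ((‖x‖ ^ 2 : ℝ)) ^ (a/2 - 1) * e * (1 + ((‖x‖ ^ 2 : ℝ)) ^ (a/2)) ^ (e - 1))))
          • (toDual ℝ (EuclideanSpace ℝ (Fin N)) x : EuclideanSpace ℝ (Fin N) →L[ℝ] ℝ)).smulRight x) x :=
    hDc.smul (hasFDerivAt_id x)
  have hev : V =ᶠ[nhds x]
      (fun y : EuclideanSpace ℝ (Fin N) => (-K * ((‖y‖ ^ 2 : ℝ)) ^ (-(s/2)) * (1 + ((‖y‖ ^ 2 : ℝ)) ^ (a/2)) ^ e) • y) := by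
    filter_upwards [eventually_ne_nhds hx] with y hy
    rw [hVform y hy]
    rw [sq_rpow ‖y‖ (-(s/2)) (norm_nonneg y), sq_rpow ‖y‖ (a/2) (norm_nonneg y),
      show (2:ℝ) * (-(s/2)) = -s by ring, show (2:ℝ) * (a/2) = a by ring]
  have hdiff : DifferentiableAt ℝ V x := hev.differentiableAt_iff.mpr hVt.differentiableAt
  refine ⟨hUpos, hdiff, ?_⟩
  have hfd := hev.fderiv_eq.trans hVt.fderiv
  rw [hfd, div_sum_computation]
  rw [hUy x]
  have hQx : (0:ℝ) < 1 + ‖x‖ ^ a := by positivity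
  -- RHS computation
  have heb : -b * (r - 1) = e - 1 := by
    apply mul_left_cancel₀ (mul_pos hpsμ hA).ne'
    rw [he1, hr]
    linear_combination (-(p - s + μ) * p) * hbD + (-(p - s + μ) * b) * hrA
  have hCrp : C ^ (r - p) = ((N:ℝ) - s) * (((N:ℝ) - p - μ) / (p - 1)) ^ (p - 1) := by
    have hrp : r - p = p * (p - s + μ) / ((N:ℝ) - p - μ) := by
      rw [hr, div_sub' hA.ne']
      congr 1; ring
    have hexp : ((N:ℝ) - p - μ) / (p * (p - s + μ)) * (r - p) = 1 := by
      rw [hrp, div_mul_div_comm, mul_comm ((N:ℝ) - p - μ) (p * (p - s + μ))]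
      exact div_self (by positivity)
    rw [hCd, ← Real.rpow_mul hBpos.le, hexp, Real.rpow_one]
  have hCr : C ^ (r - 1) = K * ((N:ℝ) - s) := by
    rw [show r - 1 = (p - 1) + (r - p) by ring, Real.rpow_add hC, hCrp, hK1]
    ring
  have hRHS : (C * (1 + ‖x‖ ^ a) ^ (-b)) ^ (r - 1)
      = (K * ((N:ℝ) - s)) * (1 + ‖x‖ ^ a) ^ (e - 1) := by
    rw [Real.mul_rpow hC.le (Real.rpow_nonneg hQx.le _), ← Real.rpow_mul hQx.le, heb, hCr]
  rw [hRHS]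
  -- conversions u ↦ t
  have j1 : ((‖x‖ ^ 2 : ℝ)) ^ (-(s/2)) = ‖x‖ ^ (-s) := by
    rw [sq_rpow ‖x‖ (-(s/2)) (norm_nonneg x)]; congr 1; ring
  have k1 : ((‖x‖ ^ 2 : ℝ)) ^ (-(s/2) - 1) = ‖x‖ ^ (-s - 2) := by
    rw [sq_rpow ‖x‖ (-(s/2) - 1) (norm_nonneg x)]; congr 1; ring
  have j3 : ((‖x‖ ^ 2 : ℝ)) ^ (a/2) = ‖x‖ ^ a := by
    rw [sq_rpow ‖x‖ (a/2) (norm_nonneg x)]; congr 1; ring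
  have k2 : ((‖x‖ ^ 2 : ℝ)) ^ (a/2 - 1) = ‖x‖ ^ (a - 2) := by
    rw [sq_rpow ‖x‖ (a/2 - 1) (norm_nonneg x)]; congr 1; ring
  have hu2 : ((‖x‖ ^ 2 : ℝ)) = ‖x‖ ^ (2:ℝ) := by
    rw [show ((2:ℝ)) = ((2:ℕ):ℝ) by norm_num, Real.rpow_natCast]
  rw [j1, k1, j3, k2, hu2]
  have m1 : ‖x‖ ^ (2:ℝ) * ‖x‖ ^ (-s - 2) = ‖x‖ ^ (-s) := by
    rw [← Real.rpow_add ht]; congr 1; ring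
  have m2 : ‖x‖ ^ (2:ℝ) * ‖x‖ ^ (a - 2) = ‖x‖ ^ a := by
    rw [← Real.rpow_add ht]; congr 1; ring
  have j5 : (1 + ‖x‖ ^ a) ^ e = (1 + ‖x‖ ^ a) ^ (e - 1) * (1 + ‖x‖ ^ a) := by
    have h := Real.rpow_add hQx (e - 1) 1
    rw [Real.rpow_one, sub_add_cancel] at h
    exact h
  have j6 : e * a = s - (N:ℝ) := by
    rw [he1]
    linear_combination (-b - 1) * hap - hbD
  linear_combination
    (-(K * s * (1 + ‖x‖ ^ a) ^ e)) * m1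
    + (K * e * a * ‖x‖ ^ (-s) * (1 + ‖x‖ ^ a) ^ (e - 1)) * m2
    + (K * ((N:ℝ) - s) * ‖x‖ ^ (-s)) * j5
    + (K * ‖x‖ ^ (-s) * ‖x‖ ^ a * (1 + ‖x‖ ^ a) ^ (e - 1)) * j6
end
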